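/- arXiv:1809.02470 — 7 statements merged into one kernel-verified Lean document; each statement's English description precedes it below -/
import Mathlib

section
/- For any two conditionally convergent series of real numbers ∑ a_n and ∑ b_n, there exists a single set A ⊆ ℕ such that the subseries of a over A tends to +∞ or -∞, and the subseries of b over A tends to +∞ or -∞. -/
open Filter

/-- The partial sums of the subseries of `a` over `A`: `S N = ∑_{n < N, n ∈ A} a n`. -/
noncomputable def partialSum (a : ℕ → ℝ) (A : Set ℕ) (N : ℕ) : ℝ :=
  ∑ n ∈ Finset.range N, Set.indicator A a n

/-- `A` sends the series `∑ a n` to infinity: the subseries over `A` tends to `+∞` or `-∞`. -/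
def SendsToInfinity (a : ℕ → ℝ) (A : Set ℕ) : Prop :=
  Tendsto (partialSum a A) atTop atTop ∨ Tendsto (partialSum a A) atTop atBot

/-- `∑ a n` is conditionally convergent: partial sums converge, but `∑ |a n| = ∞`. -/
def CondConv (a : ℕ → ℝ) : Prop :=
  (∃ L : ℝ, Tendsto (fun N => ∑ n ∈ Finset.range N, a n) atTop (nhds L)) ∧
    ¬ Summable (fun n => |a n|)

/-- The subseries of `a` over `A` is absolutely convergent: `∑_{n ∈ A} |a n| < ∞`. -/
def AbsConvOn (a : ℕ → ℝ) (A : Set ℕ) : Prop :=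
  Summable (Set.indicator A fun n => |a n|)

/-- `A` is tame w.r.t. `∑ a n` if at least one of the positive/nonpositive parts of the
subseries over `A` is absolutely convergent. -/
def Tame (a : ℕ → ℝ) (A : Set ℕ) : Prop :=
  AbsConvOn a {n ∈ A | 0 < a n} ∨ AbsConvOn a {n ∈ A | a n ≤ 0}

lemma indicator_abs_of_nonneg (a : ℕ → ℝ) (X : Set ℕ) (h : ∀ n ∈ X, 0 ≤ a n) :
    (X.indicator fun n => |a n|) = X.indicator a := by
  funext n
  by_cases hn : n ∈ X
  · simp [Set.indicator_of_mem hn, abs_of_nonneg (h n hn)]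
  · simp [Set.indicator_of_notMem hn]

lemma indicator_abs_of_nonpos (a : ℕ → ℝ) (X : Set ℕ) (h : ∀ n ∈ X, a n ≤ 0) :
    (X.indicator fun n => |a n|) = fun n => -(X.indicator a n) := by
  funext n
  by_cases hn : n ∈ X
  · simp [Set.indicator_of_mem hn, abs_of_nonpos (h n hn)]
  · simp [Set.indicator_of_notMem hn]

lemma sendsOfUnion (a : ℕ → ℝ) (X Y : Set ℕ) (hd : Disjoint X Y)
    (hsign : (∀ n ∈ X, 0 ≤ a n) ∨ (∀ n ∈ X, a n ≤ 0))
    (hX : ¬ Summable (X.indicator fun n => |a n|))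
    (hY : Summable (Y.indicator fun n => |a n|)) :
    SendsToInfinity a (X ∪ Y) := by
  -- the Y part converges
  have hYa : Summable (Y.indicator a) := by
    apply Summable.of_abs
    apply hY.congr
    intro n
    by_cases hn : n ∈ Y
    · simp [Set.indicator_of_mem hn]
    · simp [Set.indicator_of_notMem hn]
  have hYt : Tendsto (partialSum a Y) atTop (nhds (∑' n, Y.indicator a n)) :=
    hYa.hasSum.tendsto_sum_nat
  have hsum : ∀ N, partialSum a (X ∪ Y) N = partialSum a X N + partialSum a Y N := by
    intro N
    unfold partialSum
    rw [← Finset.sum_add_distrib]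
    exact Finset.sum_congr rfl fun n _ => by
      rw [Set.indicator_union_of_disjoint hd]
  rcases hsign with hpos | hneg
  · left
    have heq := indicator_abs_of_nonneg a X hpos
    rw [heq] at hX
    have hnn : ∀ n, 0 ≤ X.indicator a n := fun n =>
      Set.indicator_nonneg (fun i hi => hpos i hi) n
    have hXt : Tendsto (partialSum a X) atTop atTop :=
      (not_summable_iff_tendsto_nat_atTop_of_nonneg hnn).mp hX
    have := hYt.add_atTop hXt
    apply this.congr
    intro N
    rw [hsum N, add_comm]
  · right
    have heq := indicator_abs_of_nonpos a X hneg
    have hnn : ∀ n, 0 ≤ X.indicator (fun n => |a n|) n := fun n =>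
      Set.indicator_nonneg (fun i _ => abs_nonneg _) n
    have hXt' : Tendsto (fun N => ∑ n ∈ Finset.range N, X.indicator (fun n => |a n|) n)
        atTop atTop :=
      (not_summable_iff_tendsto_nat_atTop_of_nonneg hnn).mp hX
    have hXt : Tendsto (partialSum a X) atTop atBot := by
      have := tendsto_neg_atTop_atBot.comp hXt'
      apply this.congr
      intro N
      simp only [Function.comp_apply, ← Finset.sum_neg_distrib]
      unfold partialSum
      exact Finset.sum_congr rfl fun n _ => by rw [heq]; ring
    have := hYt.add_atBot hXt
    apply this.congr
    intro N
    rw [hsum N, add_comm]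

lemma not_summable_union_cases (g : ℕ → ℝ) (X Y : Set ℕ) (hd : Disjoint X Y)
    (h : ¬ Summable ((X ∪ Y).indicator g)) :
    ¬ Summable (X.indicator g) ∨ ¬ Summable (Y.indicator g) := by
  by_contra hc
  push_neg at hc
  exact h (by
    rw [Set.indicator_union_of_disjoint hd]
    exact hc.1.add hc.2)

lemma both_parts_not_summable (a : ℕ → ℝ) (ha : CondConv a) :
    ¬ Summable ({n | 0 < a n}.indicator fun n => |a n|) ∧
    ¬ Summable ({n | a n ≤ 0}.indicator fun n => |a n|) := by
  obtain ⟨⟨L, hL⟩, habs⟩ := ha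
  set p := {n | 0 < a n}.indicator fun n => |a n| with hp
  set q := {n | a n ≤ 0}.indicator fun n => |a n| with hq
  have hpnn : ∀ n, 0 ≤ p n := fun n => Set.indicator_nonneg (fun i _ => abs_nonneg _) n
  have hqnn : ∀ n, 0 ≤ q n := fun n => Set.indicator_nonneg (fun i _ => abs_nonneg _) n
  have hpq_abs : ∀ n, p n + q n = |a n| := by
    intro n
    rcases lt_or_ge 0 (a n) with h | h
    · have h1 : n ∈ {n | 0 < a n} := h
      have h2 : n ∉ {n | a n ≤ 0} := by simp [not_le.mpr h]
      simp [hp, hq, Set.indicator_of_mem h1, Set.indicator_of_notMem h2]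
    · have h1 : n ∉ {n | 0 < a n} := by simp [not_lt.mpr h]
      have h2 : n ∈ {n | a n ≤ 0} := h
      simp [hp, hq, Set.indicator_of_notMem h1, Set.indicator_of_mem h2]
  have hpq_a : ∀ n, p n - q n = a n := by
    intro n
    rcases lt_or_ge 0 (a n) with h | h
    · have h1 : n ∈ {n | 0 < a n} := h
      have h2 : n ∉ {n | a n ≤ 0} := by simp [not_le.mpr h]
      simp [hp, hq, Set.indicator_of_mem h1, Set.indicator_of_notMem h2,
        abs_of_pos h]
    · have h1 : n ∉ {n | 0 < a n} := by simp [not_lt.mpr h]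
      have h2 : n ∈ {n | a n ≤ 0} := h
      simp [hp, hq, Set.indicator_of_notMem h1, Set.indicator_of_mem h2,
        abs_of_nonpos h]
  constructor
  · intro hsp
    -- then q has convergent partial sums, hence summable, hence |a| summable
    have hqt : Tendsto (fun N => ∑ n ∈ Finset.range N, q n) atTop
        (nhds ((∑' n, p n) - L)) := by
      have hpt := hsp.hasSum.tendsto_sum_nat
      have := hpt.sub hL
      apply this.congr
      intro N
      rw [← Finset.sum_sub_distrib]
      exact Finset.sum_congr rfl fun n _ => by have := hpq_a n; linarith
    have hsq : Summable q := by
      by_contra hns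
      exact not_tendsto_atTop_of_tendsto_nhds hqt
        ((not_summable_iff_tendsto_nat_atTop_of_nonneg hqnn).mp hns)
    exact habs ((hsp.add hsq).congr hpq_abs)
  · intro hsq
    have hpt : Tendsto (fun N => ∑ n ∈ Finset.range N, p n) atTop
        (nhds ((∑' n, q n) + L)) := by
      have hqt := hsq.hasSum.tendsto_sum_nat
      have := hqt.add hL
      apply this.congr
      intro N
      rw [← Finset.sum_add_distrib]
      exact Finset.sum_congr rfl fun n _ => by
        have := hpq_a n; linarith
    have hsp : Summable p := by
      by_contra hns
      exact not_tendsto_atTop_of_tendsto_nhds hpt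
        ((not_summable_iff_tendsto_nat_atTop_of_nonneg hpnn).mp hns)
    exact habs ((hsp.add hsq).congr hpq_abs)

/-- For any two conditionally convergent series, there is a single `A ⊆ ℕ`
sending both series to infinity. -/
theorem two_series (a b : ℕ → ℝ) (ha : CondConv a) (hb : CondConv b) :
    ∃ A : Set ℕ, SendsToInfinity a A ∧ SendsToInfinity b A := by
  classical
  set P : Set ℕ := {n | 0 < a n ∧ 0 < b n} with hPdef
  set Q : Set ℕ := {n | 0 < a n ∧ b n ≤ 0} with hQdef
  set R : Set ℕ := {n | a n ≤ 0 ∧ 0 < b n} with hRdef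
  set S : Set ℕ := {n | a n ≤ 0 ∧ b n ≤ 0} with hSdef
  -- notation for divergence
  have hDA := both_parts_not_summable a ha
  have hDB := both_parts_not_summable b hb
  have hPQ : {n | 0 < a n} = P ∪ Q := by
    ext n
    simp only [hPdef, hQdef, Set.mem_union, Set.mem_setOf_eq]
    constructor
    · intro h
      rcases le_or_gt (b n) 0 with h' | h'
      · exact Or.inr ⟨h, h'⟩
      · exact Or.inl ⟨h, h'⟩
    · rintro (⟨h, _⟩ | ⟨h, _⟩) <;> exact h
  have hRS : {n | a n ≤ 0} = R ∪ S := by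
    ext n
    simp only [hRdef, hSdef, Set.mem_union, Set.mem_setOf_eq]
    constructor
    · intro h
      rcases le_or_gt (b n) 0 with h' | h'
      · exact Or.inr ⟨h, h'⟩
      · exact Or.inl ⟨h, h'⟩
    · rintro (⟨h, _⟩ | ⟨h, _⟩) <;> exact h
  have hPR : {n | 0 < b n} = P ∪ R := by
    ext n
    simp only [hPdef, hRdef, Set.mem_union, Set.mem_setOf_eq]
    constructor
    · intro h
      rcases le_or_gt (a n) 0 with h' | h'
      · exact Or.inr ⟨h', h⟩
      · exact Or.inl ⟨h', h⟩
    · rintro (⟨_, h⟩ | ⟨_, h⟩) <;> exact h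
  have hQS : {n | b n ≤ 0} = Q ∪ S := by
    ext n
    simp only [hQdef, hSdef, Set.mem_union, Set.mem_setOf_eq]
    constructor
    · intro h
      rcases le_or_gt (a n) 0 with h' | h'
      · exact Or.inr ⟨h', h⟩
      · exact Or.inl ⟨h', h⟩
    · rintro (⟨_, h⟩ | ⟨_, h⟩) <;> exact h
  have hdPQ : Disjoint P Q := Set.disjoint_left.mpr fun n hn hn' =>
    absurd hn.2 (not_lt.mpr hn'.2)
  have hdRS : Disjoint R S := Set.disjoint_left.mpr fun n hn hn' =>
    absurd hn.2 (not_lt.mpr hn'.2)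
  have hdPR : Disjoint P R := Set.disjoint_left.mpr fun n hn hn' =>
    absurd hn.1 (not_lt.mpr hn'.1)
  have hdQS : Disjoint Q S := Set.disjoint_left.mpr fun n hn hn' =>
    absurd hn.1 (not_lt.mpr hn'.1)
  have hemp_a : Summable ((∅ : Set ℕ).indicator fun n => |a n|) := by
    simp only [Set.indicator_empty]; exact summable_zero
  have hemp_b : Summable ((∅ : Set ℕ).indicator fun n => |b n|) := by
    simp only [Set.indicator_empty]; exact summable_zero
  -- divergence over quadrants
  have haPQ : ¬ Summable (P.indicator fun n => |a n|) ∨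
      ¬ Summable (Q.indicator fun n => |a n|) :=
    not_summable_union_cases _ P Q hdPQ (hPQ ▸ hDA.1)
  have hbPR : ¬ Summable (P.indicator fun n => |b n|) ∨
      ¬ Summable (R.indicator fun n => |b n|) :=
    not_summable_union_cases _ P R hdPR (hPR ▸ hDB.1)
  have hbQS : ¬ Summable (Q.indicator fun n => |b n|) ∨
      ¬ Summable (S.indicator fun n => |b n|) :=
    not_summable_union_cases _ Q S hdQS (hQS ▸ hDB.2)
  -- sign facts
  have hsaP : ∀ n ∈ P, 0 ≤ a n := fun n hn => le_of_lt hn.1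
  have hsaQ : ∀ n ∈ Q, 0 ≤ a n := fun n hn => le_of_lt hn.1
  have hsaR : ∀ n ∈ R, a n ≤ 0 := fun n hn => hn.1
  have hsaS : ∀ n ∈ S, a n ≤ 0 := fun n hn => hn.1
  have hsbP : ∀ n ∈ P, 0 ≤ b n := fun n hn => le_of_lt hn.2
  have hsbQ : ∀ n ∈ Q, b n ≤ 0 := fun n hn => hn.2
  have hsbR : ∀ n ∈ R, 0 ≤ b n := fun n hn => le_of_lt hn.2
  have hsbS : ∀ n ∈ S, b n ≤ 0 := fun n hn => hn.2
  rcases haPQ with haP | haQ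
  · by_cases hbP : Summable (P.indicator fun n => |b n|)
    · -- b converges on P, so b diverges on R
      have hbR : ¬ Summable (R.indicator fun n => |b n|) := by
        rcases hbPR with h | h
        · exact absurd hbP h
        · exact h
      by_cases haR : Summable (R.indicator fun n => |a n|)
      · -- A = P ∪ R
        refine ⟨P ∪ R, ?_, ?_⟩
        · exact sendsOfUnion a P R hdPR (Or.inl hsaP) haP haR
        · rw [Set.union_comm]
          exact sendsOfUnion b R P hdPR.symm (Or.inl hsbR) hbR hbP
      · -- A = R : both diverge on R
        refine ⟨R, ?_, ?_⟩
        · have := sendsOfUnion a R ∅ (Set.disjoint_empty R) (Or.inr hsaR) haR hemp_a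
          rwa [Set.union_empty] at this
        · have := sendsOfUnion b R ∅ (Set.disjoint_empty R) (Or.inl hsbR) hbR hemp_b
          rwa [Set.union_empty] at this
    · -- A = P : both diverge on P
      refine ⟨P, ?_, ?_⟩
      · have := sendsOfUnion a P ∅ (Set.disjoint_empty P) (Or.inl hsaP) haP hemp_a
        rwa [Set.union_empty] at this
      · have := sendsOfUnion b P ∅ (Set.disjoint_empty P) (Or.inl hsbP) hbP hemp_b
        rwa [Set.union_empty] at this
  · by_cases hbQ : Summable (Q.indicator fun n => |b n|)
    · have hbS : ¬ Summable (S.indicator fun n => |b n|) := by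
        rcases hbQS with h | h
        · exact absurd hbQ h
        · exact h
      by_cases haS : Summable (S.indicator fun n => |a n|)
      · -- A = Q ∪ S
        refine ⟨Q ∪ S, ?_, ?_⟩
        · exact sendsOfUnion a Q S hdQS (Or.inl hsaQ) haQ haS
        · rw [Set.union_comm]
          exact sendsOfUnion b S Q hdQS.symm (Or.inr hsbS) hbS hbQ
      · refine ⟨S, ?_, ?_⟩
        · have := sendsOfUnion a S ∅ (Set.disjoint_empty S) (Or.inr hsaS) haS hemp_a
          rwa [Set.union_empty] at this
        · have := sendsOfUnion b S ∅ (Set.disjoint_empty S) (Or.inr hsbS) hbS hemp_b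
          rwa [Set.union_empty] at this
    · refine ⟨Q, ?_, ?_⟩
      · have := sendsOfUnion a Q ∅ (Set.disjoint_empty Q) (Or.inl hsaQ) haQ hemp_a
        rwa [Set.union_empty] at this
      · have := sendsOfUnion b Q ∅ (Set.disjoint_empty Q) (Or.inr hsbQ) hbQ hemp_b
        rwa [Set.union_empty] at this
end

section
/- Let ∑ a¹_n, ∑ a²_n, ∑ a³_n be conditionally convergent series of real numbers. Then there is a partition P of ℕ into at most 8 sets such that for each i ∈ {1,2,3}: (1) there is some A ∈ P such that the subseries of a^i over A tends to +∞; (2) there is some A ∈ P such that the subseries of a^i over A tends to -∞; and (3) for every A ∈ P, the terms a^i_n for n ∈ A all have the same sign (either a^i_n > 0 for all n ∈ A, or a^i_n ≤ 0 for all n ∈ A). -/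
open Filter

open scoped Classical in
noncomputable def pat (a : Fin 3 → ℕ → ℝ) (n : ℕ) : Fin 3 → Bool :=
  fun i => decide (0 < a i n)

lemma pat_eq_true {a : Fin 3 → ℕ → ℝ} {n : ℕ} {i : Fin 3} :
    pat a n i = true ↔ 0 < a i n := by
  simp [pat]

lemma not_summable_pos (a : ℕ → ℝ) (h : CondConv a) :
    ¬ Summable (Set.indicator {n | 0 < a n} fun n => |a n|) := by
  obtain ⟨⟨L, hL⟩, hns⟩ := h
  intro hsum
  have hT : Tendsto (fun N => ∑ n ∈ Finset.range N, |a n|) atTop atTop :=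
    (not_summable_iff_tendsto_nat_atTop_of_nonneg (fun n => abs_nonneg _)).mp hns
  have hG := hsum.hasSum.tendsto_sum_nat
  have key : ∀ n, |a n| = 2 * Set.indicator {m | 0 < a m} (fun m => |a m|) n - a n := by
    intro n
    by_cases hn : 0 < a n
    · rw [Set.indicator_of_mem (show n ∈ {m | 0 < a m} from hn), abs_of_pos hn]; ring
    · rw [Set.indicator_of_notMem (show n ∉ {m | 0 < a m} from hn), abs_of_nonpos (not_lt.mp hn)]; ring
  have heq : (fun N => ∑ n ∈ Finset.range N, |a n|)
      = fun N => 2 * (∑ n ∈ Finset.range N, Set.indicator {m | 0 < a m} (fun m => |a m|) n)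
          - ∑ n ∈ Finset.range N, a n := by
    funext N
    rw [Finset.mul_sum, ← Finset.sum_sub_distrib]
    exact Finset.sum_congr rfl fun n _ => key n
  rw [heq] at hT
  exact not_tendsto_atTop_of_tendsto_nhds ((hG.const_mul 2).sub hL) hT

lemma not_summable_nonpos (a : ℕ → ℝ) (h : CondConv a) :
    ¬ Summable (Set.indicator {n | a n ≤ 0} fun n => |a n|) := by
  obtain ⟨⟨L, hL⟩, hns⟩ := h
  intro hsum
  have hT : Tendsto (fun N => ∑ n ∈ Finset.range N, |a n|) atTop atTop :=
    (not_summable_iff_tendsto_nat_atTop_of_nonneg (fun n => abs_nonneg _)).mp hns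
  have hG := hsum.hasSum.tendsto_sum_nat
  have key : ∀ n, |a n| = 2 * Set.indicator {m | a m ≤ 0} (fun m => |a m|) n + a n := by
    intro n
    by_cases hn : a n ≤ 0
    · rw [Set.indicator_of_mem (show n ∈ {m | a m ≤ 0} from hn), abs_of_nonpos hn]; ring
    · rw [Set.indicator_of_notMem (show n ∉ {m | a m ≤ 0} from hn), abs_of_pos (not_le.mp hn)]; ring
  have heq : (fun N => ∑ n ∈ Finset.range N, |a n|)
      = fun N => 2 * (∑ n ∈ Finset.range N, Set.indicator {m | a m ≤ 0} (fun m => |a m|) n)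
          + ∑ n ∈ Finset.range N, a n := by
    funext N
    rw [Finset.mul_sum, ← Finset.sum_add_distrib]
    exact Finset.sum_congr rfl fun n _ => key n
  rw [heq] at hT
  exact not_tendsto_atTop_of_tendsto_nhds ((hG.const_mul 2).add hL) hT

lemma indicator_split (a : Fin 3 → ℕ → ℝ) (f : ℕ → ℝ) (i : Fin 3) (b : Bool) (n : ℕ) :
    Set.indicator {m | pat a m i = b} f n
      = ∑ s ∈ Finset.univ.filter (fun s : Fin 3 → Bool => s i = b),
          Set.indicator (pat a ⁻¹' {s}) f n := by
  have h1 : ∀ s : Fin 3 → Bool,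
      Set.indicator (pat a ⁻¹' {s}) f n = if pat a n = s then f n else 0 := by
    intro s; by_cases h : pat a n = s <;> simp [Set.indicator, Set.mem_preimage, h]
  simp_rw [h1]
  rw [Finset.sum_ite_eq]
  by_cases h : pat a n i = b <;> simp [Set.indicator, h]

lemma exists_cell_not_summable (a : Fin 3 → ℕ → ℝ) (i : Fin 3) (b : Bool)
    (hns : ¬ Summable (Set.indicator {m | pat a m i = b} fun n => |a i n|)) :
    ∃ s : Fin 3 → Bool, s i = b ∧
      ¬ Summable (Set.indicator (pat a ⁻¹' {s}) fun n => |a i n|) := by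
  by_contra hcon
  push_neg at hcon
  apply hns
  have heq : (Set.indicator {m | pat a m i = b} fun n => |a i n|)
      = fun n => ∑ s ∈ Finset.univ.filter (fun s : Fin 3 → Bool => s i = b),
          Set.indicator (pat a ⁻¹' {s}) (fun n => |a i n|) n :=
    funext fun n => indicator_split a _ i b n
  rw [heq]
  exact summable_sum fun s hs => hcon s (Finset.mem_filter.mp hs).2

lemma tendsto_partialSum_atTop {a : ℕ → ℝ} {A : Set ℕ} (hpos : ∀ n ∈ A, 0 < a n)
    (hns : ¬ Summable (Set.indicator A fun n => |a n|)) :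
    Tendsto (partialSum a A) atTop atTop := by
  have heq : Set.indicator A a = Set.indicator A fun n => |a n| :=
    Set.indicator_congr fun n hn => (abs_of_pos (hpos n hn)).symm
  have hnn : ∀ n, 0 ≤ Set.indicator A (fun n => |a n|) n :=
    fun n => Set.indicator_nonneg (fun m _ => abs_nonneg _) n
  have := (not_summable_iff_tendsto_nat_atTop_of_nonneg hnn).mp hns
  unfold partialSum
  rw [heq]
  exact this

lemma tendsto_partialSum_atBot {a : ℕ → ℝ} {A : Set ℕ} (hneg : ∀ n ∈ A, a n ≤ 0)
    (hns : ¬ Summable (Set.indicator A fun n => |a n|)) :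
    Tendsto (partialSum a A) atTop atBot := by
  have heq : ∀ n, Set.indicator A a n = -(Set.indicator A (fun n => |a n|) n) := by
    intro n
    by_cases hn : n ∈ A
    · rw [Set.indicator_of_mem hn, Set.indicator_of_mem hn, abs_of_nonpos (hneg n hn), neg_neg]
    · rw [Set.indicator_of_notMem hn, Set.indicator_of_notMem hn, neg_zero]
  have hnn : ∀ n, 0 ≤ Set.indicator A (fun n => |a n|) n :=
    fun n => Set.indicator_nonneg (fun m _ => abs_nonneg _) n
  have hT := (not_summable_iff_tendsto_nat_atTop_of_nonneg hnn).mp hns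
  have h2 : partialSum a A = fun N => -∑ n ∈ Finset.range N, Set.indicator A (fun n => |a n|) n := by
    funext N
    unfold partialSum
    rw [← Finset.sum_neg_distrib]
    exact Finset.sum_congr rfl fun n _ => heq n
  rw [h2]
  exact tendsto_neg_atTop_atBot.comp hT

/-- Lemma 1 (partition lemma): given three conditionally convergent series, there is a
partition of `ℕ` into at most 8 sets such that for each series, some piece sends it to `+∞`,
some piece sends it to `-∞`, and on every piece the terms of the series all have the same sign. -/
theorem partition_lemma (a : Fin 3 → ℕ → ℝ) (hcc : ∀ i, CondConv (a i)) :
    ∃ P : Set (Set ℕ), P.Finite ∧ P.ncard ≤ 8 ∧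
      (∀ A ∈ P, ∀ B ∈ P, A ≠ B → Disjoint A B) ∧
      ⋃₀ P = Set.univ ∧
      ∀ i : Fin 3,
        (∃ A ∈ P, Tendsto (partialSum (a i) A) atTop atTop) ∧
        (∃ A ∈ P, Tendsto (partialSum (a i) A) atTop atBot) ∧
        (∀ A ∈ P, (∀ n ∈ A, 0 < a i n) ∨ (∀ n ∈ A, a i n ≤ 0)) := by
  classical
  refine ⟨Set.range (fun s : Fin 3 → Bool => pat a ⁻¹' {s}), Set.finite_range _, ?_, ?_, ?_, ?_⟩
  · have h1 : Set.range (fun s : Fin 3 → Bool => pat a ⁻¹' {s})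
        = ↑(Finset.univ.image (fun s : Fin 3 → Bool => pat a ⁻¹' {s})) := by
      ext A; simp
    rw [h1, Set.ncard_coe_finset]
    calc (Finset.univ.image (fun s : Fin 3 → Bool => pat a ⁻¹' {s})).card
        ≤ (Finset.univ : Finset (Fin 3 → Bool)).card := Finset.card_image_le
      _ = 8 := by simp
  · rintro A ⟨s, rfl⟩ B ⟨t, rfl⟩ hne
    refine Set.disjoint_left.mpr fun n hns hnt => hne ?_
    have hs : pat a n = s := hns
    have ht : pat a n = t := hnt
    rw [← hs, ← ht]
  · ext n
    simp only [Set.mem_sUnion, Set.mem_range, Set.mem_univ, iff_true]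
    exact ⟨_, ⟨pat a n, rfl⟩, rfl⟩
  · intro i
    have hpos_set : {m | pat a m i = true} = {m | 0 < a i m} := by
      ext m; simp [pat_eq_true]
    have hneg_set : {m | pat a m i = false} = {m | a i m ≤ 0} := by
      ext m
      simp only [Set.mem_setOf_eq, ← not_lt]
      rw [← pat_eq_true (a := a) (n := m) (i := i)]
      simp
    refine ⟨?_, ?_, ?_⟩
    · have hns : ¬ Summable (Set.indicator {m | pat a m i = true} fun n => |a i n|) := by
        rw [hpos_set]; exact not_summable_pos (a i) (hcc i)
      obtain ⟨s, hsi, hs⟩ := exists_cell_not_summable a i true hns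
      refine ⟨pat a ⁻¹' {s}, ⟨s, rfl⟩, tendsto_partialSum_atTop ?_ hs⟩
      intro n hn
      have : pat a n = s := hn
      exact pat_eq_true.mp (by rw [this, hsi])
    · have hns : ¬ Summable (Set.indicator {m | pat a m i = false} fun n => |a i n|) := by
        rw [hneg_set]; exact not_summable_nonpos (a i) (hcc i)
      obtain ⟨s, hsi, hs⟩ := exists_cell_not_summable a i false hns
      refine ⟨pat a ⁻¹' {s}, ⟨s, rfl⟩, tendsto_partialSum_atBot ?_ hs⟩
      intro n hn
      have hp : pat a n = s := hn
      by_contra hlt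
      have : pat a n i = true := pat_eq_true.mpr (not_le.mp hlt)
      rw [hp, hsi] at this
      exact Bool.false_ne_true this
    · rintro A ⟨s, rfl⟩
      cases hsi : s i with
      | true =>
        left; intro n hn
        have : pat a n = s := hn
        exact pat_eq_true.mp (by rw [this, hsi])
      | false =>
        right; intro n hn
        have hp : pat a n = s := hn
        by_contra hlt
        have : pat a n i = true := pat_eq_true.mpr (not_le.mp hlt)
        rw [hp, hsi] at this
        exact Bool.false_ne_true this
end

section
/- Let ∑ a_n be a conditionally convergent series of real numbers, and let A, B ⊆ ℕ be tame with respect to ∑ a_n. If the subseries of a over A tends to +∞, and the subseries of a over B either tends to +∞ or converges to a real number, then A ∪ B is tame with respect to ∑ a_n and the subseries of a over A ∪ B tends to +∞. -/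
open Filter

lemma absConvOn_subset {a : ℕ → ℝ} {S T : Set ℕ} (h : AbsConvOn a T) (hST : S ⊆ T) :
    AbsConvOn a S := by
  have := h.indicator S
  rwa [Set.indicator_indicator, Set.inter_eq_self_of_subset_left hST] at this

lemma psum_split (a : ℕ → ℝ) (A : Set ℕ) (N : ℕ) :
    partialSum a A N = partialSum a {n ∈ A | 0 < a n} N + partialSum a {n ∈ A | a n ≤ 0} N := by
  unfold partialSum
  rw [← Finset.sum_add_distrib]
  refine Finset.sum_congr rfl fun n _ => ?_
  by_cases hA : n ∈ A
  · by_cases h : 0 < a n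
    · rw [Set.indicator_of_mem hA, Set.indicator_of_mem (by exact ⟨hA, h⟩),
        Set.indicator_of_notMem (fun hc => absurd hc.2 (not_le.mpr h))]
      ring
    · rw [Set.indicator_of_mem hA, Set.indicator_of_notMem (fun hc => absurd hc.2 h),
        Set.indicator_of_mem (by exact ⟨hA, not_lt.mp h⟩)]
      ring
  · rw [Set.indicator_of_notMem hA, Set.indicator_of_notMem (fun hc => hA hc.1),
      Set.indicator_of_notMem (fun hc => hA hc.1)]
    ring

lemma psum_abs_bound {a : ℕ → ℝ} {S : Set ℕ} (h : AbsConvOn a S) :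
    ∃ C : ℝ, ∀ N, |partialSum a S N| ≤ C := by
  refine ⟨∑' n, Set.indicator S (fun n => |a n|) n, fun N => ?_⟩
  calc |partialSum a S N| ≤ ∑ n ∈ Finset.range N, |Set.indicator S a n| :=
        Finset.abs_sum_le_sum_abs _ _
    _ = ∑ n ∈ Finset.range N, Set.indicator S (fun n => |a n|) n := by
        refine Finset.sum_congr rfl fun n _ => ?_
        by_cases hn : n ∈ S
        · simp [Set.indicator_of_mem hn]
        · simp [Set.indicator_of_notMem hn]
    _ ≤ ∑' n, Set.indicator S (fun n => |a n|) n :=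
        Summable.sum_le_tsum _ (fun n _ => Set.indicator_nonneg (fun _ _ => abs_nonneg _) n) h

lemma psum_nonneg {a : ℕ → ℝ} {S : Set ℕ} (hS : ∀ n ∈ S, 0 ≤ a n) (N : ℕ) :
    0 ≤ partialSum a S N :=
  Finset.sum_nonneg fun n _ => Set.indicator_nonneg (fun n hn => hS n hn) n

lemma psum_nonpos {a : ℕ → ℝ} {S : Set ℕ} (hS : ∀ n ∈ S, a n ≤ 0) (N : ℕ) :
    partialSum a S N ≤ 0 :=
  Finset.sum_nonpos fun n _ => Set.indicator_nonpos (fun n hn => hS n hn) n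

lemma psum_conv {a : ℕ → ℝ} {S : Set ℕ} (h : AbsConvOn a S) :
    ∃ L : ℝ, Tendsto (partialSum a S) atTop (nhds L) := by
  have hsum : Summable (Set.indicator S a) := by
    refine Summable.of_abs ?_
    have : (fun n => |Set.indicator S a n|) = Set.indicator S fun n => |a n| := by
      funext n
      by_cases hn : n ∈ S <;> simp [Set.indicator_of_mem, Set.indicator_of_notMem, hn]
    rw [this]; exact h
  exact ⟨_, hsum.hasSum.tendsto_sum_nat⟩

lemma psum_nonpos_atBot {a : ℕ → ℝ} {S : Set ℕ} (hS : ∀ n ∈ S, a n ≤ 0)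
    (h : ¬ AbsConvOn a S) : Tendsto (partialSum a S) atTop atBot := by
  have key : ∀ N, partialSum a S N = -∑ n ∈ Finset.range N, Set.indicator S (fun n => |a n|) n := by
    intro N
    rw [← Finset.sum_neg_distrib]
    refine Finset.sum_congr rfl fun n _ => ?_
    by_cases hn : n ∈ S
    · rw [Set.indicator_of_mem hn, Set.indicator_of_mem hn, abs_of_nonpos (hS n hn), neg_neg]
    · simp [Set.indicator_of_notMem hn]
  have htop : Tendsto (fun N => ∑ n ∈ Finset.range N, Set.indicator S (fun n => |a n|) n)
      atTop atTop :=
    (not_summable_iff_tendsto_nat_atTop_of_nonneg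
      (fun n => Set.indicator_nonneg (fun _ _ => abs_nonneg _) n)).mp h
  have hneg : Tendsto (fun N => -∑ n ∈ Finset.range N, Set.indicator S (fun n => |a n|) n)
      atTop atBot := tendsto_neg_atTop_atBot.comp htop
  simpa [← key] using hneg

theorem tame_union_top' (a : ℕ → ℝ) (A B : Set ℕ)
    (hA : Tame a A) (hB : Tame a B)
    (hAtop : Tendsto (partialSum a A) atTop atTop)
    (hBok : Tendsto (partialSum a B) atTop atTop ∨
      ∃ t : ℝ, Tendsto (partialSum a B) atTop (nhds t)) :
    Tame a (A ∪ B) ∧ Tendsto (partialSum a (A ∪ B)) atTop atTop := by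
  have hApos : ¬ AbsConvOn a {n ∈ A | 0 < a n} := by
    intro hpos
    obtain ⟨C, hC⟩ := psum_abs_bound hpos
    have hub : ∀ N, partialSum a A N ≤ C := fun N => by
      rw [psum_split a A N]
      have h1 := (abs_le.mp (hC N)).2
      have h2 := psum_nonpos (S := {n ∈ A | a n ≤ 0}) (fun n hn => hn.2) N
      linarith
    obtain ⟨N, hN⟩ := (hAtop.eventually_ge_atTop (C+1)).exists
    linarith [hub N]
  have hA' : AbsConvOn a {n ∈ A | a n ≤ 0} := hA.resolve_left hApos
  have hB' : AbsConvOn a {n ∈ B | a n ≤ 0} := by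
    by_contra hnp
    have hposB : AbsConvOn a {n ∈ B | 0 < a n} := hB.resolve_right hnp
    obtain ⟨L, hL⟩ := psum_conv hposB
    have hbot : Tendsto (partialSum a {n ∈ B | a n ≤ 0}) atTop atBot :=
      psum_nonpos_atBot (fun n hn => hn.2) hnp
    have hBbot : Tendsto (partialSum a B) atTop atBot := by
      have := hL.add_atBot hbot
      have heq : (fun N => partialSum a {n ∈ B | 0 < a n} N +
          partialSum a {n ∈ B | a n ≤ 0} N) = partialSum a B := by
        funext N; rw [psum_split a B N]
      rwa [heq] at this
    rcases hBok with h | ⟨t, h⟩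
    · obtain ⟨N, h1, h2⟩ := ((hBbot.eventually_le_atBot 0).and (h.eventually_ge_atTop 1)).exists
      linarith
    · exact absurd h (not_tendsto_nhds_of_tendsto_atBot hBbot t)
  have habs : AbsConvOn a {n ∈ A ∪ B | a n ≤ 0} := by
    have hadd := hA'.add hB'
    refine Summable.of_nonneg_of_le
      (fun n => Set.indicator_nonneg (fun _ _ => abs_nonneg _) n) (fun n => ?_) hadd
    by_cases hn : n ∈ {n ∈ A ∪ B | a n ≤ 0}
    · rw [Set.indicator_of_mem hn]
      have h1 : 0 ≤ Set.indicator {n ∈ A | a n ≤ 0} (fun n => |a n|) n :=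
        Set.indicator_nonneg (fun _ _ => abs_nonneg _) n
      have h2 : 0 ≤ Set.indicator {n ∈ B | a n ≤ 0} (fun n => |a n|) n :=
        Set.indicator_nonneg (fun _ _ => abs_nonneg _) n
      rcases hn.1 with hnA | hnB
      · have := Set.indicator_of_mem (show n ∈ {n ∈ A | a n ≤ 0} from ⟨hnA, hn.2⟩)
          (fun n => |a n|)
        rw [this]; linarith
      · have := Set.indicator_of_mem (show n ∈ {n ∈ B | a n ≤ 0} from ⟨hnB, hn.2⟩)
          (fun n => |a n|)
        rw [this]; linarith
    · rw [Set.indicator_of_notMem hn]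
      exact add_nonneg (Set.indicator_nonneg (fun _ _ => abs_nonneg _) n)
        (Set.indicator_nonneg (fun _ _ => abs_nonneg _) n)
  have hsplit : ∀ N, partialSum a (A ∪ B) N = partialSum a A N + partialSum a (B \ A) N := by
    intro N; unfold partialSum; rw [← Finset.sum_add_distrib]
    refine Finset.sum_congr rfl fun n _ => ?_
    by_cases hnA : n ∈ A
    · rw [Set.indicator_of_mem (Set.mem_union_left _ hnA), Set.indicator_of_mem hnA,
        Set.indicator_of_notMem (fun hc => hc.2 hnA)]
      ring
    · by_cases hnB : n ∈ B
      · rw [Set.indicator_of_mem (Set.mem_union_right _ hnB), Set.indicator_of_notMem hnA,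
          Set.indicator_of_mem (show n ∈ B \ A from ⟨hnB, hnA⟩)]
        ring
      · rw [Set.indicator_of_notMem (fun hc => hc.elim hnA hnB),
          Set.indicator_of_notMem hnA, Set.indicator_of_notMem (fun hc => hnB hc.1)]
        ring
  have hBA : AbsConvOn a {n ∈ B \ A | a n ≤ 0} :=
    absConvOn_subset hB' (fun n hn => ⟨hn.1.1, hn.2⟩)
  obtain ⟨C, hC⟩ := psum_abs_bound hBA
  have hlow : ∀ N, -C ≤ partialSum a (B \ A) N := fun N => by
    rw [psum_split a (B \ A) N]
    have h1 := psum_nonneg (S := {n ∈ B \ A | 0 < a n}) (fun n hn => le_of_lt hn.2) N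
    have h2 := (abs_le.mp (hC N)).1
    linarith
  have hmain : Tendsto (fun N => partialSum a A N + -C) atTop atTop :=
    tendsto_atTop_add_const_right _ _ hAtop
  refine ⟨Or.inr habs, tendsto_atTop_mono (fun N => ?_) hmain⟩
  rw [hsplit N]
  linarith [hlow N]

/-- Lemma 4 (union of tame sets, `+∞` case): if `A` and `B` are tame, the subseries over `A`
tends to `+∞`, and the subseries over `B` tends to `+∞` or converges, then `A ∪ B` is tame and
the subseries over `A ∪ B` tends to `+∞`. -/
theorem tame_union_top (a : ℕ → ℝ) (hcc : CondConv a) (A B : Set ℕ)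
    (hA : Tame a A) (hB : Tame a B)
    (hAtop : Tendsto (partialSum a A) atTop atTop)
    (hBok : Tendsto (partialSum a B) atTop atTop ∨
      ∃ t : ℝ, Tendsto (partialSum a B) atTop (nhds t)) :
    Tame a (A ∪ B) ∧ Tendsto (partialSum a (A ∪ B)) atTop atTop := by
  exact tame_union_top' a A B hA hB hAtop hBok
end

section
/- Let F be a full, union-closed subset of Fn(3,2) containing no function whose domain is all of {1,2,3}. Then F contains two functions f and g such that |dom(f)| = |dom(g)| = 2, |dom(f) ∩ dom(g)| = 1, and f and g take different values at the unique element of dom(f) ∩ dom(g). -/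
open Filter

/-- A partial function from `{1,2,3}` to the two-element set `{p, n}` (here `p = true`,
`n = false`), encoded as `Fin 3 → Option Bool`. `Fn32` is the set of such partial functions
with nonempty domain. -/
def Fn32 : Set (Fin 3 → Option Bool) :=
  {f | ∃ x, f x ≠ none}

/-- The domain of a partial function. -/
def pdom (f : Fin 3 → Option Bool) : Finset (Fin 3) :=
  Finset.univ.filter (fun x => f x ≠ none)

/-- `F` is full: every value is attained at every point by some member of `F`. -/
def Full (F : Set (Fin 3 → Option Bool)) : Prop :=
  ∀ x : Fin 3, ∀ y : Bool, ∃ f ∈ F, f x = some y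

/-- Two partial functions are compatible if they agree on the intersection of their domains. -/
def Compatible (f g : Fin 3 → Option Bool) : Prop :=
  ∀ x, f x = none ∨ g x = none ∨ f x = g x

/-- The union of two (compatible) partial functions. -/
def pUnion (f g : Fin 3 → Option Bool) : Fin 3 → Option Bool :=
  fun x => (f x).orElse (fun _ => g x)

/-- `F` is union-closed: the union of any two compatible members of `F` is in `F`. -/
def UnionClosed (F : Set (Fin 3 → Option Bool)) : Prop :=
  ∀ f ∈ F, ∀ g ∈ F, Compatible f g → pUnion f g ∈ F


lemma mem_pdom {f : Fin 3 → Option Bool} {x : Fin 3} : x ∈ pdom f ↔ f x ≠ none := by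
  simp [pdom]

lemma fin3_cases (a b c y : Fin 3) (hab : a ≠ b) (hac : a ≠ c) (hbc : b ≠ c) :
    y = a ∨ y = b ∨ y = c := by
  fin_cases a <;> fin_cases b <;> fin_cases c <;> fin_cases y <;> simp_all

lemma pUnion_none {f g : Fin 3 → Option Bool} {x : Fin 3} (h : pUnion f g x = none) :
    f x = none ∧ g x = none := by
  rcases hf : f x with _ | a
  · refine ⟨rfl, ?_⟩
    simpa [pUnion, hf, Option.orElse] using h
  · exfalso; simp [pUnion, hf, Option.orElse] at h

lemma step1 (F : Set (Fin 3 → Option Bool))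
    (hfull : Full F) (huc : UnionClosed F)
    (hnofull : ∀ f ∈ F, ∃ x, f x = none) :
    ∃ f ∈ F, ∃ m : Fin 3, f m = none ∧ ∀ x, x ≠ m → f x ≠ none := by
  obtain ⟨f, hf, hf0⟩ := hfull 0 true
  rcases h1 : f 1 with _ | b
  · rcases h2 : f 2 with _ | c
    · -- f defined only at 0; take g defined at 1
      obtain ⟨g, hg, hg1⟩ := hfull 1 true
      rcases k0 : g 0 with _ | d
      · rcases k2 : g 2 with _ | e
        · -- union of f and g
          have hc : Compatible f g := by
            intro x; fin_cases x <;> simp [h1, h2, k0, k2]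
          refine ⟨pUnion f g, huc f hf g hg hc, 2, ?_, ?_⟩
          · simp [pUnion, h2, k2, Option.orElse]
          · intro x hx; fin_cases x <;>
              simp_all [pUnion, hf0, h1, hg1, Option.orElse]
        · refine ⟨g, hg, 0, k0, ?_⟩
          intro x hx; fin_cases x <;> simp_all [hg1, k2]
      · rcases k2 : g 2 with _ | e
        · refine ⟨g, hg, 2, k2, ?_⟩
          intro x hx; fin_cases x <;> simp_all [hg1, k0]
        · exfalso
          obtain ⟨y, hy⟩ := hnofull g hg
          fin_cases y <;> simp_all
    · refine ⟨f, hf, 1, h1, ?_⟩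
      intro x hx; fin_cases x <;> simp_all [hf0, h2]
  · rcases h2 : f 2 with _ | c
    · refine ⟨f, hf, 2, h2, ?_⟩
      intro x hx; fin_cases x <;> simp_all [hf0, h1]
    · exfalso
      obtain ⟨y, hy⟩ := hnofull f hf
      fin_cases y <;> simp_all

/-- If `F ⊆ Fn(3,2)` is full and union-closed and contains no function with full domain,
then `F` contains two functions with two-element domains meeting in a single point, at which
they take different values. -/
theorem exists_incompatible_pair (F : Set (Fin 3 → Option Bool)) (hF : F ⊆ Fn32)
    (hfull : Full F) (huc : UnionClosed F)
    (hnofull : ∀ f ∈ F, ∃ x, f x = none) :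
    ∃ f ∈ F, ∃ g ∈ F, (pdom f).card = 2 ∧ (pdom g).card = 2 ∧
      (pdom f ∩ pdom g).card = 1 ∧
      ∀ x ∈ pdom f ∩ pdom g, f x ≠ g x := by
  obtain ⟨f, hfF, m, hfm, hfrest⟩ := step1 F hfull huc hnofull
  obtain ⟨g, hgF, hgm⟩ := hfull m true
  have hnc : ¬ Compatible f g := by
    intro hc
    obtain ⟨x, hx⟩ := hnofull _ (huc f hfF g hgF hc)
    obtain ⟨hx1, hx2⟩ := pUnion_none hx
    rcases eq_or_ne x m with rfl | hxm
    · rw [hgm] at hx2; exact Option.some_ne_none _ hx2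
    · exact hfrest x hxm hx1
  rw [Compatible] at hnc; push_neg at hnc
  obtain ⟨x0, hfx0, hgx0, hne⟩ := hnc
  have hx0m : x0 ≠ m := fun h => hfx0 (h ▸ hfm)
  have hgnone : ∀ x, x ≠ m → x ≠ x0 → g x = none := by
    intro x hxm hxx0
    by_contra hgx
    obtain ⟨y, hy⟩ := hnofull g hgF
    rcases fin3_cases m x0 x y hx0m.symm (Ne.symm hxm) (Ne.symm hxx0) with rfl | rfl | rfl
    · rw [hgm] at hy; exact Option.some_ne_none _ hy
    · exact hgx0 hy
    · exact hgx hy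
  have hpf : pdom f = {m}ᶜ := by
    ext x
    simp only [mem_pdom, Finset.mem_compl, Finset.mem_singleton]
    constructor
    · rintro h rfl; exact h hfm
    · exact hfrest x
  have hpg : pdom g = {m, x0} := by
    ext x
    simp only [mem_pdom, Finset.mem_insert, Finset.mem_singleton]
    constructor
    · intro h
      by_contra hc
      push_neg at hc
      exact h (hgnone x hc.1 hc.2)
    · rintro (rfl | rfl)
      · rw [hgm]; exact fun h => Option.some_ne_none _ h
      · exact hgx0
  have hint : pdom f ∩ pdom g = {x0} := by
    rw [hpf, hpg]
    ext x
    simp only [Finset.mem_inter, Finset.mem_compl, Finset.mem_singleton, Finset.mem_insert]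
    constructor
    · rintro ⟨hxm, rfl | rfl⟩
      · exact absurd rfl hxm
      · rfl
    · rintro rfl; exact ⟨hx0m, Or.inr rfl⟩
  refine ⟨f, hfF, g, hgF, ?_, ?_, ?_, ?_⟩
  · rw [hpf, Finset.card_compl]; simp
  · rw [hpg, Finset.card_pair hx0m.symm]
  · rw [hint, Finset.card_singleton]
  · intro x hx
    rw [hint, Finset.mem_singleton] at hx
    subst hx
    exact hne
end

section
/- Let ∑ a_n be a conditionally convergent series of real numbers and let A ⊆ ℕ be tame with respect to ∑ a_n. If the subseries of a over A tends to +∞, then there is a set B ⊆ A such that the subseries of a over B tends to +∞ and the subseries of a over A \ B tends to +∞. -/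
open Filter

noncomputable def ThetaB (x : ℝ) : ℝ :=
  (⌊x/2⌋ : ℝ)/2 + min (1/2) (max 0 (x - 2*(⌊x/2⌋ : ℝ) - 1/2))

lemma minmax_lip {c s t : ℝ} (h : t ≤ s) :
    min c (max 0 s) ≤ min c (max 0 t) + (s - t) := by
  have hA : max 0 s ≤ max 0 t + (s - t) := by
    refine max_le ?_ ?_
    · have := le_max_left (0:ℝ) t; linarith
    · have := le_max_right (0:ℝ) t; linarith
  have : min c (max 0 s) ≤ min (c + (s-t)) (max 0 t + (s-t)) :=
    min_le_min (by linarith) hA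
  rwa [min_add_add_right] at this

lemma ThetaB_ge (x : ℝ) : x/4 - 1/2 ≤ ThetaB x := by
  have h1 : x/2 - 1 < (⌊x/2⌋ : ℝ) := Int.sub_one_lt_floor _
  have h2 : (0:ℝ) ≤ min (1/2) (max 0 (x - 2*(⌊x/2⌋ : ℝ) - 1/2)) :=
    le_min (by norm_num) (le_max_left _ _)
  unfold ThetaB; linarith

lemma ThetaB_even_step {x g : ℝ} (hx : Even ⌊x⌋) (hg0 : 0 ≤ g) (hg : g ≤ 1/2) :
    ThetaB (x + g) ≤ ThetaB x + g := by
  obtain ⟨k, hk'⟩ := hx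
  have hk : ⌊x⌋ = 2*k := by rw [hk']; ring
  have hxlb : 2*(k:ℝ) ≤ x := by
    have := Int.floor_le x; rw [hk] at this; push_cast at this; linarith
  have hxub : x < 2*(k:ℝ) + 1 := by
    have := Int.lt_floor_add_one x; rw [hk] at this; push_cast at this; linarith
  have hf1 : ⌊x/2⌋ = k := by
    rw [Int.floor_eq_iff]; constructor <;> push_cast <;> linarith
  have hf2 : ⌊(x+g)/2⌋ = k := by
    rw [Int.floor_eq_iff]; constructor <;> push_cast <;> linarith
  unfold ThetaB
  rw [hf1, hf2]
  have := minmax_lip (c := (1:ℝ)/2) (s := x + g - 2*(k:ℝ) - 1/2)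
    (t := x - 2*(k:ℝ) - 1/2) (by linarith)
  linarith

lemma ThetaB_odd_step {x g : ℝ} (hx : Odd ⌊x⌋) (hg0 : 0 ≤ g) (hg : g ≤ 1/2) :
    ThetaB (x + g) ≤ ThetaB x := by
  obtain ⟨k, hk⟩ := hx
  have hxlb : 2*(k:ℝ) + 1 ≤ x := by
    have := Int.floor_le x; rw [hk] at this; push_cast at this; linarith
  have hxub : x < 2*(k:ℝ) + 2 := by
    have := Int.lt_floor_add_one x; rw [hk] at this; push_cast at this; linarith
  have hf1 : ⌊x/2⌋ = k := by
    rw [Int.floor_eq_iff]; constructor <;> push_cast <;> linarith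
  have hmx : min (1/2) (max 0 (x - 2*(k:ℝ) - 1/2)) = 1/2 := by
    rw [max_eq_right (by linarith), min_eq_left (by linarith)]
  rcases lt_or_ge (x + g) (2*(k:ℝ) + 2) with h | h
  · have hf2 : ⌊(x+g)/2⌋ = k := by
      rw [Int.floor_eq_iff]; constructor <;> push_cast <;> linarith
    unfold ThetaB; rw [hf1, hf2, hmx]
    have : min (1/2) (max 0 (x + g - 2*(k:ℝ) - 1/2)) ≤ 1/2 := min_le_left _ _
    linarith
  · have hf2 : ⌊(x+g)/2⌋ = k + 1 := by
      rw [Int.floor_eq_iff]; constructor <;> push_cast <;> linarith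
    unfold ThetaB; rw [hf1, hf2, hmx]
    push_cast
    have : min (1/2) (max 0 (x + g - 2*((k:ℝ)+1) - 1/2)) = 0 := by
      rw [max_eq_left (by linarith), min_eq_right (by norm_num)]
    rw [this]; linarith

lemma split_half (g : ℕ → ℝ) (n₀ : ℕ)
    (hT : Tendsto (fun N => ∑ n ∈ Finset.range N, g n) atTop atTop)
    (E : Set ℕ) (c : ℝ)
    (hstepE : ∀ n, n₀ ≤ n → n ∈ E →
      ThetaB (∑ m ∈ Finset.range (n+1), g m - c) ≤ ThetaB (∑ m ∈ Finset.range n, g m - c) + g n)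
    (hstepO : ∀ n, n₀ ≤ n → n ∉ E →
      ThetaB (∑ m ∈ Finset.range (n+1), g m - c) ≤ ThetaB (∑ m ∈ Finset.range n, g m - c)) :
    Tendsto (fun N => ∑ n ∈ Finset.range N, Set.indicator E g n) atTop atTop := by
  set T : ℕ → ℝ := fun N => ∑ n ∈ Finset.range N, g n with hTdef
  set u : ℕ → ℝ := fun N => ∑ n ∈ Finset.range N, Set.indicator E g n with hudef
  have key : ∀ N, n₀ ≤ N → ThetaB (T N - c) - ThetaB (T n₀ - c) ≤ u N - u n₀ := by
    intro N hN
    induction N, hN using Nat.le_induction with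
    | base => simp
    | succ N hN ih =>
      have hu : u (N+1) = u N + Set.indicator E g N := Finset.sum_range_succ _ _
      by_cases hE : N ∈ E
      · have h1 := hstepE N hN hE
        rw [hu, Set.indicator_of_mem hE]
        simp only [hTdef] at h1 ⊢
        linarith
      · have h1 := hstepO N hN hE
        rw [hu, Set.indicator_of_notMem hE]
        simp only [hTdef] at h1 ⊢
        linarith
  have hmono : Tendsto (fun N => (T N - c)/4 - 1/2 - ThetaB (T n₀ - c) + u n₀) atTop atTop := by
    apply Tendsto.atTop_add _ tendsto_const_nhds
    apply Tendsto.atTop_add _ tendsto_const_nhds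
    apply Tendsto.atTop_add _ tendsto_const_nhds
    exact (hT.atTop_add tendsto_const_nhds).atTop_div_const (by norm_num)
  refine tendsto_atTop_mono' atTop ?_ hmono
  filter_upwards [eventually_ge_atTop n₀] with N hN
  have h1 := key N hN
  have h2 := ThetaB_ge (T N - c)
  linarith

lemma split_core (g : ℕ → ℝ) (hg0 : ∀ n, 0 ≤ g n)
    (hgz : Tendsto g atTop (nhds 0))
    (hT : Tendsto (fun N => ∑ n ∈ Finset.range N, g n) atTop atTop) :
    ∃ E : Set ℕ,
      Tendsto (fun N => ∑ n ∈ Finset.range N, Set.indicator E g n) atTop atTop ∧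
      Tendsto (fun N => ∑ n ∈ Finset.range N, Set.indicator Eᶜ g n) atTop atTop := by
  have hev : ∀ᶠ n in atTop, g n ≤ 1/2 := by
    have := hgz.eventually_le_const (show (0:ℝ) < 1/2 by norm_num)
    exact this
  obtain ⟨n₀, hn₀⟩ := hev.exists_forall_of_atTop
  set T : ℕ → ℝ := fun N => ∑ n ∈ Finset.range N, g n with hTdef
  have hsucc : ∀ n, T (n+1) = T n + g n := fun n => Finset.sum_range_succ _ _
  refine ⟨{n | Even ⌊T n⌋}, ?_, ?_⟩
  · apply split_half g n₀ hT _ 0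
    · intro n hn hE
      simp only [sub_zero]
      rw [show (∑ m ∈ Finset.range (n+1), g m) = T n + g n from hsucc n]
      exact ThetaB_even_step hE (hg0 n) (hn₀ n hn)
    · intro n hn hE
      simp only [sub_zero]
      rw [show (∑ m ∈ Finset.range (n+1), g m) = T n + g n from hsucc n]
      exact ThetaB_odd_step (Int.not_even_iff_odd.mp hE) (hg0 n) (hn₀ n hn)
  · apply split_half g n₀ hT _ 1
    · intro n hn hE
      have hodd : Odd ⌊T n⌋ := Int.not_even_iff_odd.mp hE
      have heven : Even ⌊T n - 1⌋ := by
        have : ⌊T n - 1⌋ = ⌊T n⌋ - 1 := by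
          rw [show (1:ℝ) = ((1:ℤ):ℝ) by norm_num, Int.floor_sub_intCast]
        rw [this]
        exact Int.even_sub_one.mpr (Int.not_even_iff_odd.mpr hodd)
      rw [show (∑ m ∈ Finset.range (n+1), g m) - 1 = (T n - 1) + g n by
        rw [Finset.sum_range_succ]; ring]
      exact ThetaB_even_step heven (hg0 n) (hn₀ n hn)
    · intro n hn hE
      have heven : Even ⌊T n⌋ := not_not.mp (fun h => hE h)
      have hodd : Odd ⌊T n - 1⌋ := by
        have : ⌊T n - 1⌋ = ⌊T n⌋ - 1 := by
          rw [show (1:ℝ) = ((1:ℤ):ℝ) by norm_num, Int.floor_sub_intCast]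
        rw [this]
        exact Int.not_even_iff_odd.mp (fun h => (Int.even_sub_one.mp h) heven)
      rw [show (∑ m ∈ Finset.range (n+1), g m) - 1 = (T n - 1) + g n by
        rw [Finset.sum_range_succ]; ring]
      exact ThetaB_odd_step hodd (hg0 n) (hn₀ n hn)

/-- Lemma 8 (balance 1): if `A` is tame and its subseries tends to `+∞`, then `A` splits
into `B` and `A \ B` whose subseries both tend to `+∞`. -/
theorem balance_one (a : ℕ → ℝ) (hcc : CondConv a) (A : Set ℕ) (hA : Tame a A)
    (htop : Tendsto (partialSum a A) atTop atTop) :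
    ∃ B ⊆ A, Tendsto (partialSum a B) atTop atTop ∧
      Tendsto (partialSum a (A \ B)) atTop atTop := by
  classical
  set P : Set ℕ := {n ∈ A | 0 < a n} with hP
  set Q : Set ℕ := {n ∈ A | a n ≤ 0} with hQ
  -- a tends to 0
  obtain ⟨L, hL⟩ := hcc.1
  have ha0 : Tendsto a atTop (nhds 0) := by
    have h1 := (hL.comp (tendsto_add_atTop_nat 1)).sub hL
    simp only [Function.comp_def, Finset.sum_range_succ, add_sub_cancel_left,
      sub_self] at h1
    exact h1
  -- indicator split
  have hsplit : ∀ n, Set.indicator A a n = Set.indicator P a n + Set.indicator Q a n := by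
    intro n
    by_cases hnA : n ∈ A
    · rcases lt_or_ge 0 (a n) with h | h
      · rw [Set.indicator_of_mem hnA, Set.indicator_of_mem (by exact ⟨hnA, h⟩),
          Set.indicator_of_notMem (fun hc => absurd hc.2 (not_le.mpr h))]
        ring
      · rw [Set.indicator_of_mem hnA,
          Set.indicator_of_notMem (fun hc : n ∈ P => absurd hc.2 (not_lt.mpr h)),
          Set.indicator_of_mem (show n ∈ Q from ⟨hnA, h⟩)]
        ring
    · rw [Set.indicator_of_notMem hnA, Set.indicator_of_notMem (fun hc => hnA hc.1),
        Set.indicator_of_notMem (fun hc => hnA hc.1)]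
      ring
  have hsumsplit : ∀ N, partialSum a A N = partialSum a P N + partialSum a Q N := by
    intro N
    unfold partialSum
    rw [← Finset.sum_add_distrib]
    exact Finset.sum_congr rfl (fun n _ => hsplit n)
  -- resolve tameness
  have hQabs : AbsConvOn a Q := by
    rcases hA with h | h
    · exfalso
      have heq : Set.indicator P (fun n => |a n|) = Set.indicator P a :=
        Set.indicator_congr (fun n hn => abs_of_pos hn.2)
      have hsP : Summable (Set.indicator P a) := by rw [← heq]; exact h
      have hPnonneg : ∀ n, 0 ≤ Set.indicator P a n :=
        fun n => Set.indicator_nonneg (fun m hm => le_of_lt hm.2) n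
      have hbd : ∀ N, partialSum a A N ≤ ∑' n, Set.indicator P a n := by
        intro N
        rw [hsumsplit N]
        have h1 : partialSum a P N ≤ ∑' n, Set.indicator P a n :=
          Summable.sum_le_tsum (Finset.range N) (fun i _ => hPnonneg i) hsP
        have h2 : partialSum a Q N ≤ 0 :=
          Finset.sum_nonpos (fun i _ => Set.indicator_nonpos (fun m hm => hm.2) i)
        linarith
      obtain ⟨N, hN⟩ := (htop.eventually_ge_atTop (∑' n, Set.indicator P a n + 1)).exists
      have := hbd N
      linarith
    · exact h
  -- partial sums over Q converge
  have hQsum : Summable (Set.indicator Q a) := by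
    have heq : Set.indicator Q (fun n => |a n|) = Set.indicator Q (fun n => -a n) :=
      Set.indicator_congr (fun n hn => abs_of_nonpos hn.2)
    have h1 : Summable (Set.indicator Q (fun n => -a n)) := by rw [← heq]; exact hQabs
    have h2 : Set.indicator Q (fun n => -a n) = fun n => -Set.indicator Q a n := by
      funext n; by_cases hn : n ∈ Q <;> simp [hn]
    rw [h2] at h1
    simpa using h1.neg
  have hQtend : Tendsto (partialSum a Q) atTop (nhds (∑' n, Set.indicator Q a n)) :=
    hQsum.hasSum.tendsto_sum_nat
  -- partial sums over P tend to atTop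
  have hPtend : Tendsto (partialSum a P) atTop atTop := by
    have heq : partialSum a P = fun N => partialSum a A N + -(partialSum a Q N) := by
      funext N; rw [hsumsplit N]; ring
    rw [heq]
    exact htop.atTop_add hQtend.neg
  -- apply split_core with g = indicator P a
  set g : ℕ → ℝ := Set.indicator P a with hg
  have hg0 : ∀ n, 0 ≤ g n := fun n => Set.indicator_nonneg (fun m hm => le_of_lt hm.2) n
  have hgz : Tendsto g atTop (nhds 0) := by
    apply squeeze_zero hg0 (fun n => ?_) (by simpa using ha0.abs)
    by_cases hn : n ∈ P
    · rw [hg, Set.indicator_of_mem hn]; exact le_abs_self _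
    · rw [hg, Set.indicator_of_notMem hn]; exact abs_nonneg _
  obtain ⟨E, hE, hEc⟩ := split_core g hg0 hgz hPtend
  refine ⟨E ∩ P, fun n hn => hn.2.1, ?_, ?_⟩
  · have heq : partialSum a (E ∩ P) = fun N => ∑ n ∈ Finset.range N, Set.indicator E g n := by
      funext N
      unfold partialSum
      rw [hg, Set.indicator_indicator]
    rw [heq]; exact hE
  · have heq : ∀ n, Set.indicator (A \ (E ∩ P)) a n =
        Set.indicator Eᶜ g n + Set.indicator Q a n := by
      intro n
      rw [hg, Set.indicator_indicator]
      by_cases hnA : n ∈ A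
      · rcases lt_or_ge 0 (a n) with h | h
        · have hnP : n ∈ P := ⟨hnA, h⟩
          have hnQ : n ∉ Q := fun hc => absurd hc.2 (not_le.mpr h)
          by_cases hnE : n ∈ E
          · rw [Set.indicator_of_notMem (fun hc : n ∈ A \ (E ∩ P) => hc.2 ⟨hnE, hnP⟩),
              Set.indicator_of_notMem (fun hc : n ∈ Eᶜ ∩ P => hc.1 hnE),
              Set.indicator_of_notMem hnQ]
            ring
          · rw [Set.indicator_of_mem (show n ∈ A \ (E ∩ P) from ⟨hnA, fun hc => hnE hc.1⟩),
              Set.indicator_of_mem (show n ∈ Eᶜ ∩ P from ⟨hnE, hnP⟩),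
              Set.indicator_of_notMem hnQ]
            ring
        · have hnP : n ∉ P := fun hc => absurd hc.2 (not_lt.mpr h)
          have hnQ : n ∈ Q := ⟨hnA, h⟩
          rw [Set.indicator_of_mem (show n ∈ A \ (E ∩ P) from ⟨hnA, fun hc => hnP hc.2⟩),
            Set.indicator_of_notMem (fun hc : n ∈ Eᶜ ∩ P => hnP hc.2),
            Set.indicator_of_mem hnQ]
          ring
      · rw [Set.indicator_of_notMem (fun hc : n ∈ A \ (E ∩ P) => hnA hc.1),
          Set.indicator_of_notMem (fun hc : n ∈ Eᶜ ∩ P => hnA hc.2.1),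
          Set.indicator_of_notMem (fun hc : n ∈ Q => hnA hc.1)]
        ring
    have heq2 : partialSum a (A \ (E ∩ P)) =
        fun N => (∑ n ∈ Finset.range N, Set.indicator Eᶜ g n) + partialSum a Q N := by
      funext N
      unfold partialSum
      rw [← Finset.sum_add_distrib]
      exact Finset.sum_congr rfl (fun n _ => heq n)
    rw [heq2]
    exact hEc.atTop_add hQtend
end

section
/- Let ∑ a_n be a conditionally convergent series of real numbers and let A ⊆ ℕ. Suppose both A and ℕ \ A are tame with respect to ∑ a_n, the subseries of a over A tends to +∞, and the subseries of a over ℕ \ A tends to -∞. Then for every C ⊆ A there is some B ⊆ ℕ \ A such that the subseries of a over C ∪ B converges to a real number. -/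
open Filter

lemma ind_split (a : ℕ → ℝ) (X : Set ℕ) (n : ℕ) :
    X.indicator a n = ({k ∈ X | 0 < a k}).indicator a n + ({k ∈ X | a k ≤ 0}).indicator a n := by
  by_cases hX : n ∈ X
  · by_cases hp : 0 < a n
    · simp [Set.indicator_apply, hX, hp, not_le.2 hp]
    · simp [Set.indicator_apply, hX, hp, not_lt.1 hp]
  · simp [Set.indicator_apply, hX]

lemma ind_pos_abs (a : ℕ → ℝ) (X : Set ℕ) (n : ℕ) :
    ({k ∈ X | 0 < a k}).indicator a n = ({k ∈ X | 0 < a k}).indicator (fun k => |a k|) n := by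
  by_cases h : n ∈ {k ∈ X | 0 < a k}
  · simp only [Set.indicator_of_mem h]; exact (abs_of_pos h.2).symm
  · simp [Set.indicator_of_notMem h]

lemma ind_neg_abs (a : ℕ → ℝ) (X : Set ℕ) (n : ℕ) :
    ({k ∈ X | a k ≤ 0}).indicator a n = -({k ∈ X | a k ≤ 0}).indicator (fun k => |a k|) n := by
  by_cases h : n ∈ {k ∈ X | a k ≤ 0}
  · simp only [Set.indicator_of_mem h]; rw [abs_of_nonpos h.2]; ring
  · simp [Set.indicator_of_notMem h]


lemma ind_abs_le (a : ℕ → ℝ) {X Y : Set ℕ} (hXY : X ⊆ Y) (n : ℕ) :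
    |X.indicator a n| ≤ Y.indicator (fun k => |a k|) n := by
  by_cases h : n ∈ X
  · rw [Set.indicator_of_mem h, Set.indicator_of_mem (hXY h)]
  · rw [Set.indicator_of_notMem h, abs_zero]
    exact Set.indicator_nonneg (fun m _ => abs_nonneg _) n

open Classical in
noncomputable def gT (a : ℕ → ℝ) (C N : Set ℕ) : ℕ → ℝ
  | 0 => 0
  | n + 1 => gT a C N n + C.indicator a n + if n ∈ N ∧ 0 ≤ gT a C N n then a n else 0

/-- Lemma 9 (balance 2): if `A` and `ℕ \ A` are tame, the subseries over `A` tends to `+∞`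
and the subseries over `ℕ \ A` tends to `-∞`, then for every `C ⊆ A` there is `B ⊆ ℕ \ A`
such that the subseries over `C ∪ B` converges. -/
theorem balance_two (a : ℕ → ℝ) (hcc : CondConv a) (A : Set ℕ)
    (hA : Tame a A) (hAc : Tame a (Set.univ \ A))
    (htop : Tendsto (partialSum a A) atTop atTop)
    (hbot : Tendsto (partialSum a (Set.univ \ A)) atTop atBot) :
    ∀ C ⊆ A, ∃ B ⊆ Set.univ \ A, ∃ L : ℝ,
      Tendsto (partialSum a (C ∪ B)) atTop (nhds L) := by
  
  classical
  intro C hC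
  obtain ⟨LS, hLS⟩ := hcc.1
  -- negative part of A is absolutely convergent
  have hAneg : Summable (Set.indicator {n ∈ A | a n ≤ 0} fun n => |a n|) := by
    rcases hA with h | h
    · exfalso
      set K := ∑' k, Set.indicator {n ∈ A | 0 < a n} (fun n => |a n|) k with hK
      have hb : ∀ n, partialSum a A n ≤ K := by
        intro n
        have e1 : partialSum a A n = ∑ k ∈ Finset.range n, ({m ∈ A | 0 < a m}).indicator a k
            + ∑ k ∈ Finset.range n, ({m ∈ A | a m ≤ 0}).indicator a k := by
          rw [← Finset.sum_add_distrib]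
          exact Finset.sum_congr rfl (fun k _ => ind_split a A k)
        have e2 : ∑ k ∈ Finset.range n, ({m ∈ A | 0 < a m}).indicator a k ≤ K := by
          rw [Finset.sum_congr rfl (fun k _ => ind_pos_abs a A k)]
          exact Summable.sum_le_tsum _ (fun k _ => Set.indicator_nonneg (fun m _ => abs_nonneg _) k) h
        have e3 : ∑ k ∈ Finset.range n, ({m ∈ A | a m ≤ 0}).indicator a k ≤ 0 :=
          Finset.sum_nonpos (fun k _ => Set.indicator_apply_nonpos (fun hk => hk.2) )
        linarith
      obtain ⟨n, hn⟩ := (htop.eventually (eventually_ge_atTop (K + 1))).exists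
      linarith [hb n]
    · exact h
  -- positive part of Aᶜ is absolutely convergent
  have hAcpos : Summable (Set.indicator {n ∈ Set.univ \ A | 0 < a n} fun n => |a n|) := by
    rcases hAc with h | h
    · exact h
    · exfalso
      set K := ∑' k, Set.indicator {n ∈ Set.univ \ A | a n ≤ 0} (fun n => |a n|) k with hK
      have hb : ∀ n, -K ≤ partialSum a (Set.univ \ A) n := by
        intro n
        have e1 : partialSum a (Set.univ \ A) n
            = ∑ k ∈ Finset.range n, ({m ∈ Set.univ \ A | 0 < a m}).indicator a k
            + ∑ k ∈ Finset.range n, ({m ∈ Set.univ \ A | a m ≤ 0}).indicator a k := by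
          rw [← Finset.sum_add_distrib]
          exact Finset.sum_congr rfl (fun k _ => ind_split a _ k)
        have e2 : (0:ℝ) ≤ ∑ k ∈ Finset.range n, ({m ∈ Set.univ \ A | 0 < a m}).indicator a k := by
          rw [Finset.sum_congr rfl (fun k _ => ind_pos_abs a _ k)]
          exact Finset.sum_nonneg (fun k _ => Set.indicator_nonneg (fun m _ => abs_nonneg _) k)
        have e3 : -K ≤ ∑ k ∈ Finset.range n, ({m ∈ Set.univ \ A | a m ≤ 0}).indicator a k := by
          rw [Finset.sum_congr rfl (fun k _ => ind_neg_abs a _ k), Finset.sum_neg_distrib]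
          have := Summable.sum_le_tsum (Finset.range n)
            (fun k _ => Set.indicator_nonneg (f := fun m => |a m|) (fun m _ => abs_nonneg _) k) h
          exact neg_le_neg this
        linarith
      obtain ⟨n, hn⟩ := (hbot.eventually (eventually_le_atBot (-K - 1))).exists
      linarith [hb n]
    -- terms tend to zero
  have ha0 : Tendsto a atTop (nhds 0) := by
    have h1 : Tendsto (fun n => ∑ k ∈ Finset.range (n + 1), a k) atTop (nhds LS) :=
      hLS.comp (tendsto_add_atTop_nat 1)
    have h2 := h1.sub hLS
    rw [sub_self] at h2
    refine h2.congr fun n => ?_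
    simp [Finset.sum_range_succ]
  by_cases hCp : Summable (Set.indicator {n ∈ C | 0 < a n} fun n => |a n|)
  · -- easy case : subseries over C converges, take B = ∅
    have h1 : Summable (Set.indicator {n ∈ C | 0 < a n} a) :=
      Summable.of_abs (Summable.of_nonneg_of_le (fun n => abs_nonneg _)
        (fun n => ind_abs_le a (le_refl _) n) hCp)
    have h2 : Summable (Set.indicator {n ∈ C | a n ≤ 0} a) :=
      Summable.of_abs (Summable.of_nonneg_of_le (fun n => abs_nonneg _)
        (fun n => ind_abs_le a (X := {n ∈ C | a n ≤ 0}) (Y := {n ∈ A | a n ≤ 0}) (fun x hx => ⟨hC hx.1, hx.2⟩) n) hAneg)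
    have hCsum : Summable (C.indicator a) :=
      (h1.add h2).congr (fun n => (ind_split a C n).symm)
    refine ⟨∅, by simp, ∑' n, C.indicator a n, ?_⟩
    have := hCsum.hasSum.tendsto_sum_nat
    refine this.congr fun n => ?_
    simp [partialSum]
  -- hard case : positive part of C diverges
  have hCpos_div : Tendsto (fun n => ∑ k ∈ Finset.range n,
      Set.indicator {m ∈ C | 0 < a m} (fun i => |a i|) k) atTop atTop :=
    (not_summable_iff_tendsto_nat_atTop_of_nonneg
      (fun n => Set.indicator_nonneg (fun m _ => abs_nonneg _) n)).1 hCp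
  set Nn : Set ℕ := {n | n ∈ Set.univ \ A ∧ a n ≤ 0} with hNndef
  set T : ℕ → ℝ := gT a C Nn with hTdef
  set B : Set ℕ := {n | n ∈ Nn ∧ 0 ≤ T n} with hBdef
  have hBA : B ⊆ Set.univ \ A := fun n hn => hn.1.1
  have hNA : ∀ {k}, k ∈ Nn → k ∉ A := fun hk => hk.1.2
  have hNC : ∀ {k}, k ∈ Nn → k ∉ C := fun hk hc => hk.1.2 (hC hc)
  have hstep : ∀ n, T (n + 1) = T n + C.indicator a n +
      (if n ∈ Nn ∧ 0 ≤ T n then a n else 0) := by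
    intro n
    rw [hTdef]
    rw [gT]
    congr 1
    by_cases h : n ∈ Nn ∧ 0 ≤ gT a C Nn n
    · rw [if_pos h, if_pos h]
    · rw [if_neg h, if_neg h]
  have hTsum : ∀ M, partialSum a (C ∪ B) M = T M := by
    intro M
    induction M with
    | zero => simp [partialSum, hTdef, gT]
    | succ n ih =>
      have : partialSum a (C ∪ B) (n + 1) = partialSum a (C ∪ B) n + (C ∪ B).indicator a n := by
        simp [partialSum, Finset.sum_range_succ]
      rw [this, ih, hstep n]
      have : (C ∪ B).indicator a n = C.indicator a n + (if n ∈ Nn ∧ 0 ≤ T n then a n else 0) := by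
        by_cases hc : n ∈ C
        · rw [Set.indicator_of_mem (Set.mem_union_left _ hc), Set.indicator_of_mem hc,
            if_neg (fun h => hNC h.1 hc)]
          ring
        · by_cases hb : n ∈ Nn ∧ 0 ≤ T n
          · rw [Set.indicator_of_mem (Set.mem_union_right _ (show n ∈ B from hb)), Set.indicator_of_notMem hc,
              if_pos hb]
            ring
          · rw [Set.indicator_of_notMem (fun h => h.elim hc hb), Set.indicator_of_notMem hc,
              if_neg hb]
            ring
      rw [this]
      ring
  refine ⟨B, hBA, ?_⟩
  suffices h : ∃ L, Tendsto T atTop (nhds L) by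
    obtain ⟨L, hL⟩ := h
    exact ⟨L, hL.congr fun n => (hTsum n).symm⟩
  -- telescoping
  have hTrange : ∀ n, T n = ∑ k ∈ Finset.range n,
      (C.indicator a k + if k ∈ Nn ∧ 0 ≤ T k then a k else 0) := by
    intro n
    induction n with
    | zero => simp [hTdef, gT]
    | succ n ih => rw [Finset.sum_range_succ, ← ih, hstep n]; ring
  have hTsub : ∀ m n, m ≤ n → T n = T m + ∑ k ∈ Finset.Ico m n,
      (C.indicator a k + if k ∈ Nn ∧ 0 ≤ T k then a k else 0) := by
    intro m n h
    rw [hTrange n, hTrange m, Finset.sum_Ico_eq_sub _ h]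
    ring
  set P1 : Set ℕ := {n ∈ A \ C | 0 < a n} with hP1def
  set P2 : Set ℕ := {n ∈ A \ C | a n ≤ 0} with hP2def
  set P3 : Set ℕ := {n ∈ Set.univ \ A | 0 < a n} with hP3def
  have hptw : ∀ k, C.indicator a k + Nn.indicator a k
      = a k - P1.indicator a k - P2.indicator a k - P3.indicator a k := by
    intro k
    by_cases hkA : k ∈ A
    · have h1 : k ∉ Nn := fun h => hNA h hkA
      have h4 : k ∉ P3 := fun h => h.1.2 hkA
      by_cases hkC : k ∈ C
      · have h2 : k ∉ P1 := fun h => h.1.2 hkC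
        have h3 : k ∉ P2 := fun h => h.1.2 hkC
        rw [Set.indicator_of_mem hkC, Set.indicator_of_notMem h1, Set.indicator_of_notMem h2,
          Set.indicator_of_notMem h3, Set.indicator_of_notMem h4]
        ring
      · rw [Set.indicator_of_notMem hkC, Set.indicator_of_notMem h1,
          Set.indicator_of_notMem h4]
        rcases le_or_gt (a k) 0 with hs | hs
        · rw [Set.indicator_of_notMem (show k ∉ P1 from fun h => absurd h.2 (not_lt.2 hs)),
            Set.indicator_of_mem (show k ∈ P2 from ⟨⟨hkA, hkC⟩, hs⟩)]
          ring
        · rw [Set.indicator_of_mem (show k ∈ P1 from ⟨⟨hkA, hkC⟩, hs⟩),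
            Set.indicator_of_notMem (show k ∉ P2 from fun h => absurd hs (not_lt.2 h.2))]
          ring
    · have hkC : k ∉ C := fun h => hkA (hC h)
      have h2 : k ∉ P1 := fun h => hkA h.1.1
      have h3 : k ∉ P2 := fun h => hkA h.1.1
      rw [Set.indicator_of_notMem hkC, Set.indicator_of_notMem h2, Set.indicator_of_notMem h3]
      rcases le_or_gt (a k) 0 with hs | hs
      · rw [Set.indicator_of_mem (show k ∈ Nn from ⟨⟨Set.mem_univ k, hkA⟩, hs⟩),
          Set.indicator_of_notMem (show k ∉ P3 from fun h => absurd h.2 (not_lt.2 hs))]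
        ring
      · rw [Set.indicator_of_notMem (show k ∉ Nn from fun h => absurd hs (not_lt.2 h.2)),
          Set.indicator_of_mem (show k ∈ P3 from ⟨⟨Set.mem_univ k, hkA⟩, hs⟩)]
        ring
  have hvsum : Summable (P2.indicator a) :=
    Summable.of_abs (Summable.of_nonneg_of_le (fun n => abs_nonneg _)
      (fun n => ind_abs_le a (X := P2) (Y := {n ∈ A | a n ≤ 0})
        (fun x hx => ⟨hx.1.1, hx.2⟩) n) hAneg)
  have hwsum : Summable (P3.indicator a) :=
    Summable.of_abs (Summable.of_nonneg_of_le (fun n => abs_nonneg _)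
      (fun n => ind_abs_le a (X := P3) (Y := P3) (le_refl _) n) hAcpos)
  by_cases hE1 : ∀ m, ∃ n, m ≤ n ∧ T n < 0
  · by_cases hE2 : ∀ m, ∃ n, m ≤ n ∧ 0 ≤ T n
    · -- oscillation: T tends to 0
      refine ⟨0, Metric.tendsto_atTop.2 fun ε hε => ?_⟩
      set δ := ε / 8 with hδdef
      have hδ : 0 < δ := by positivity
      obtain ⟨M1, hM1⟩ := Metric.tendsto_atTop.1 ha0 δ hδ
      obtain ⟨M2, hM2⟩ := Metric.cauchySeq_iff.1 hLS.cauchySeq δ hδ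
      obtain ⟨M3, hM3⟩ := Metric.cauchySeq_iff.1 hAneg.hasSum.tendsto_sum_nat.cauchySeq δ hδ
      set M := max M1 (max M2 M3) with hMdef
      have hM1M : M1 ≤ M := le_max_left _ _
      have hM2M : M2 ≤ M := le_trans (le_max_left _ _) (le_max_right _ _)
      have hM3M : M3 ≤ M := le_trans (le_max_right _ _) (le_max_right _ _)
      have ha' : ∀ n, M ≤ n → |a n| ≤ δ := by
        intro n hn
        have := hM1 n (le_trans hM1M hn)
        rw [Real.dist_eq, sub_zero] at this
        exact le_of_lt this
      have hCa : ∀ k, |C.indicator a k| ≤ |a k| := by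
        intro k
        by_cases h : k ∈ C
        · rw [Set.indicator_of_mem h]
        · rw [Set.indicator_of_notMem h, abs_zero]
          exact abs_nonneg _
      have hWa : ∀ m n, M ≤ m → m ≤ n → |∑ k ∈ Finset.Ico m n, a k| ≤ δ := by
        intro m n hm hmn
        rw [Finset.sum_Ico_eq_sub _ hmn, ← Real.dist_eq]
        exact le_of_lt (hM2 _ (le_trans hM2M (le_trans hm hmn)) _ (le_trans hM2M hm))
      have hWneg : ∀ m n, M ≤ m → m ≤ n →
          ∑ k ∈ Finset.Ico m n, ({i ∈ A | a i ≤ 0}).indicator (fun i => |a i|) k ≤ δ := by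
        intro m n hm hmn
        rw [Finset.sum_Ico_eq_sub _ hmn]
        have := hM3 _ (le_trans hM3M (le_trans hm hmn)) _ (le_trans hM3M hm)
        rw [Real.dist_eq] at this
        exact le_of_lt (lt_of_abs_lt this)
      have hNoStep : ∀ m n, m ≤ n → (∀ k, m ≤ k → k < n → ¬(k ∈ Nn ∧ 0 ≤ T k)) →
          T n = T m + ∑ k ∈ Finset.Ico m n, C.indicator a k := by
        intro m n hmn h
        rw [hTsub m n hmn]
        congr 1
        refine Finset.sum_congr rfl fun k hk => ?_
        obtain ⟨h1, h2⟩ := Finset.mem_Ico.1 hk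
        rw [if_neg (h k h1 h2), add_zero]
      have hUpper : ∀ m n, M ≤ m → m ≤ n → (∀ k, m ≤ k → k < n → (k ∈ Nn → 0 ≤ T k)) →
          T n ≤ T m + 2 * δ := by
        intro m n hMm hmn h
        have heq : T n = T m + ∑ k ∈ Finset.Ico m n, (C.indicator a k + Nn.indicator a k) := by
          rw [hTsub m n hmn]
          congr 1
          refine Finset.sum_congr rfl fun k hk => ?_
          obtain ⟨h1, h2⟩ := Finset.mem_Ico.1 hk
          by_cases hkN : k ∈ Nn
          · rw [if_pos ⟨hkN, h k h1 h2 hkN⟩, Set.indicator_of_mem hkN]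
          · rw [if_neg (fun hh => hkN hh.1), Set.indicator_of_notMem hkN]
        have hpt : ∀ k, C.indicator a k + Nn.indicator a k
            ≤ a k + ({i ∈ A | a i ≤ 0}).indicator (fun i => |a i|) k := by
          intro k
          rw [hptw k]
          have h1 : 0 ≤ P1.indicator a k := Set.indicator_nonneg (fun m hm => le_of_lt hm.2) k
          have h3 : 0 ≤ P3.indicator a k := Set.indicator_nonneg (fun m hm => le_of_lt hm.2) k
          have h2 : |P2.indicator a k| ≤ ({i ∈ A | a i ≤ 0}).indicator (fun i => |a i|) k :=
            ind_abs_le a (X := P2) (Y := {i ∈ A | a i ≤ 0}) (fun x hx => ⟨hx.1.1, hx.2⟩) k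
          have h2' := (abs_le.1 h2).1
          linarith
        have hs := Finset.sum_le_sum (fun k (_ : k ∈ Finset.Ico m n) => hpt k)
        have hsplit : ∑ k ∈ Finset.Ico m n, (a k + ({i ∈ A | a i ≤ 0}).indicator (fun i => |a i|) k)
            = ∑ k ∈ Finset.Ico m n, a k
              + ∑ k ∈ Finset.Ico m n, ({i ∈ A | a i ≤ 0}).indicator (fun i => |a i|) k :=
          Finset.sum_add_distrib
        have hWa' := (abs_le.1 (hWa m n hMm hmn)).2
        have hWn' := hWneg m n hMm hmn
        rw [heq]
        linarith
      have hLower : ∀ m n, M ≤ m → m ≤ n → (∀ k, m ≤ k → k < n → ¬(k ∈ Nn ∧ 0 ≤ T k)) →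
          T m - δ ≤ T n := by
        intro m n hMm hmn h
        rw [hNoStep m n hmn h]
        have hpt : ∀ k, -(({i ∈ A | a i ≤ 0}).indicator (fun i => |a i|) k) ≤ C.indicator a k := by
          intro k
          have hsub : {m ∈ C | a m ≤ 0} ⊆ {i ∈ A | a i ≤ 0} := fun x hx => ⟨hC hx.1, hx.2⟩
          have h2 : |({m ∈ C | a m ≤ 0}).indicator a k|
              ≤ ({i ∈ A | a i ≤ 0}).indicator (fun i => |a i|) k := ind_abs_le a hsub k
          rw [ind_split a C k]
          have h1 : 0 ≤ ({m ∈ C | 0 < a m}).indicator a k :=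
            Set.indicator_nonneg (fun m hm => le_of_lt hm.2) k
          have h2' := (abs_le.1 h2).1
          linarith
        have hs := Finset.sum_le_sum (fun k (_ : k ∈ Finset.Ico m n) => hpt k)
        rw [Finset.sum_neg_distrib] at hs
        have hWn' := hWneg m n hMm hmn
        linarith
      obtain ⟨p, hp1, hp2⟩ := hE1 (M + 1)
      have hq_ex : ∃ n, p ≤ n ∧ 0 ≤ T n := hE2 p
      obtain ⟨q, hqge, hqpos, hqmin⟩ :
          ∃ q, p ≤ q ∧ 0 ≤ T q ∧ ∀ k, k < q → ¬(p ≤ k ∧ 0 ≤ T k) :=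
        ⟨Nat.find hq_ex, (Nat.find_spec hq_ex).1, (Nat.find_spec hq_ex).2,
          fun k hk => Nat.find_min hq_ex hk⟩
      have hq : p ≤ q ∧ 0 ≤ T q := ⟨hqge, hqpos⟩
      have hMp : M + 1 ≤ p := hp1
      have hMq : M + 1 ≤ q := le_trans hp1 hq.1
      have hTq : T q ≤ δ := by
        have hpq : p < q := by
          rcases lt_or_eq_of_le hq.1 with h | h
          · exact h
          · exfalso
            rw [← h] at hq
            exact absurd hq.2 (not_le.2 hp2)
        have hq1 : q - 1 + 1 = q := Nat.succ_pred_eq_of_pos (Nat.lt_of_le_of_lt (Nat.zero_le p) hpq)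
        have hprev : T (q - 1) < 0 := by
          by_contra hcon
          exact hqmin (q - 1) (by omega) ⟨by omega, not_lt.1 hcon⟩
        have hst := hstep (q - 1)
        rw [hq1] at hst
        rw [hst, if_neg (fun h => absurd h.2 (not_le.2 hprev))]
        have hbound := (abs_le.1 (le_trans (hCa (q - 1)) (ha' (q - 1) (by omega)))).2
        linarith
      have hup : ∀ n, q ≤ n → T n ≤ 3 * δ := by
        intro n hn
        obtain ⟨m, hmsp, hmle, hmgr⟩ :
            ∃ m, (q ≤ m ∧ (m = q ∨ T m < 0)) ∧ m ≤ n ∧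
              ∀ k, m < k → k ≤ n → ¬(q ≤ k ∧ (k = q ∨ T k < 0)) :=
          ⟨Nat.findGreatest (fun k => q ≤ k ∧ (k = q ∨ T k < 0)) n,
            Nat.findGreatest_spec (P := fun k => q ≤ k ∧ (k = q ∨ T k < 0)) hn
              ⟨le_refl q, Or.inl rfl⟩, Nat.findGreatest_le n,
            fun k h1 h2 => Nat.findGreatest_is_greatest h1 h2⟩
        have hmge : q ≤ m := hmsp.1
        have hmax : ∀ k, m < k → k ≤ n → 0 ≤ T k := by
          intro k hk1 hk2
          by_contra hcon
          exact hmgr k hk1 hk2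
            ⟨le_trans hmge (le_of_lt hk1), Or.inr (not_le.1 hcon)⟩
        rcases hmsp.2 with hmq | hmneg
        · have hcond : ∀ k, q ≤ k → k < n → (k ∈ Nn → 0 ≤ T k) := by
            intro k h1 h2 _
            rcases eq_or_lt_of_le h1 with h | h
            · rw [← h]
              exact hq.2
            · exact hmax k (by omega) (le_of_lt h2)
          have := hUpper q n (by omega) hn hcond
          linarith
        · rcases eq_or_lt_of_le hmle with h | hlt
          · rw [h] at hmneg
            linarith
          · have hTm1 : T (m + 1) ≤ δ := by
              rw [hstep m, if_neg (fun h => absurd h.2 (not_le.2 hmneg))]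
              have hbound := (abs_le.1 (le_trans (hCa m) (ha' m (by omega)))).2
              linarith
            have hcond : ∀ k, m + 1 ≤ k → k < n → (k ∈ Nn → 0 ≤ T k) :=
              fun k h1 h2 _ => hmax k (by omega) (le_of_lt h2)
            have := hUpper (m + 1) n (by omega) hlt hcond
            linarith
      have hlow : ∀ n, q ≤ n → -(2 * δ) ≤ T n := by
        intro n hn
        obtain ⟨m, hmsp, hmle, hmgr⟩ :
            ∃ m, (q ≤ m ∧ (m = q ∨ (m - 1 ∈ Nn ∧ 0 ≤ T (m - 1)))) ∧ m ≤ n ∧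
              ∀ k, m < k → k ≤ n → ¬(q ≤ k ∧ (k = q ∨ (k - 1 ∈ Nn ∧ 0 ≤ T (k - 1)))) :=
          ⟨Nat.findGreatest (fun k => q ≤ k ∧ (k = q ∨ (k - 1 ∈ Nn ∧ 0 ≤ T (k - 1)))) n,
            Nat.findGreatest_spec (P := fun k => q ≤ k ∧ (k = q ∨ (k - 1 ∈ Nn ∧ 0 ≤ T (k - 1)))) hn
              ⟨le_refl q, Or.inl rfl⟩, Nat.findGreatest_le n,
            fun k h1 h2 => Nat.findGreatest_is_greatest h1 h2⟩
        have hmge : q ≤ m := hmsp.1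
        have hnostep : ∀ k, m ≤ k → k < n → ¬(k ∈ Nn ∧ 0 ≤ T k) := by
          intro k h1 h2 hcon
          refine hmgr (k + 1) (by omega) (by omega) ?_
          exact ⟨by omega, Or.inr hcon⟩
        have hTm : -δ ≤ T m := by
          rcases hmsp.2 with hmq | hmstep
          · rw [hmq]
            linarith [hq.2]
          · have hm1 : m - 1 + 1 = m := Nat.succ_pred_eq_of_pos (n := m) (by omega)
            have hst := hstep (m - 1)
            rw [hm1] at hst
            have hCm : C.indicator a (m - 1) = 0 := Set.indicator_of_notMem (hNC hmstep.1) _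
            have ham := (abs_le.1 (ha' (m - 1) (by omega))).1
            rw [hst, hCm, if_pos hmstep]
            linarith [hmstep.2]
        have := hLower m n (by omega) hmle hnostep
        linarith
      refine ⟨q, fun n hn => ?_⟩
      rw [Real.dist_eq, sub_zero]
      have h1 := hup n hn
      have h2 := hlow n hn
      rw [abs_lt]
      constructor <;> [linarith; linarith]
    · -- eventually negative: contradiction
      exfalso
      push_neg at hE2
      obtain ⟨m0, hm0⟩ := hE2
      have key : ∀ n, m0 ≤ n → T n = T m0 + ∑ k ∈ Finset.Ico m0 n, C.indicator a k := by
        intro n hn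
        rw [hTsub m0 n hn]
        congr 1
        refine Finset.sum_congr rfl fun k hk => ?_
        rw [if_neg, add_zero]
        exact fun h => absurd h.2 (not_le.2 (hm0 k (Finset.mem_Ico.1 hk).1))
      have hlb : ∀ k, ({m ∈ C | 0 < a m}).indicator (fun i => |a i|) k
          - ({n ∈ A | a n ≤ 0}).indicator (fun i => |a i|) k ≤ C.indicator a k := by
        intro k
        rw [ind_split a C k, ind_pos_abs a C k]
        have h1 : -(({n ∈ A | a n ≤ 0}).indicator (fun i => |a i|) k)
            ≤ ({m ∈ C | a m ≤ 0}).indicator a k := by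
          rw [ind_neg_abs a C k]
          have hsub : {m ∈ C | a m ≤ 0} ⊆ {n ∈ A | a n ≤ 0} := fun x hx => ⟨hC hx.1, hx.2⟩
          exact neg_le_neg (Set.indicator_le_indicator_of_subset hsub
            (fun m => abs_nonneg (a m)) k)
        linarith
      set KA := ∑' k, ({n ∈ A | a n ≤ 0}).indicator (fun i => |a i|) k with hKA
      obtain ⟨n, hn1, hn2⟩ := ((hCpos_div.eventually (eventually_ge_atTop
        (KA - T m0 + ∑ k ∈ Finset.range m0, ({m ∈ C | 0 < a m}).indicator (fun i => |a i|) k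
          + 1))).and (eventually_ge_atTop m0)).exists
      have h1 : ∑ k ∈ Finset.Ico m0 n, ({n ∈ A | a n ≤ 0}).indicator (fun i => |a i|) k ≤ KA :=
        Summable.sum_le_tsum _ (fun k _ => Set.indicator_nonneg (fun m _ => abs_nonneg _) k) hAneg
      have h2 : ∑ k ∈ Finset.Ico m0 n, ({m ∈ C | 0 < a m}).indicator (fun i => |a i|) k
          = ∑ k ∈ Finset.range n, ({m ∈ C | 0 < a m}).indicator (fun i => |a i|) k
            - ∑ k ∈ Finset.range m0, ({m ∈ C | 0 < a m}).indicator (fun i => |a i|) k :=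
        Finset.sum_Ico_eq_sub _ hn2
      have h3 : ∑ k ∈ Finset.Ico m0 n, (({m ∈ C | 0 < a m}).indicator (fun i => |a i|) k
          - ({n ∈ A | a n ≤ 0}).indicator (fun i => |a i|) k)
          ≤ ∑ k ∈ Finset.Ico m0 n, C.indicator a k :=
        Finset.sum_le_sum (fun k _ => hlb k)
      rw [Finset.sum_sub_distrib, h2] at h3
      have h5 := key n hn2
      have h6 := hm0 n hn2
      linarith
  · -- eventually nonnegative
    push_neg at hE1
    obtain ⟨m0, hm0⟩ := hE1
    have key : ∀ n, m0 ≤ n → T n = T m0 + ∑ k ∈ Finset.Ico m0 n,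
        (a k - P1.indicator a k - P2.indicator a k - P3.indicator a k) := by
      intro n hn
      rw [hTsub m0 n hn]
      congr 1
      refine Finset.sum_congr rfl fun k hk => ?_
      rw [← hptw k]
      by_cases hkN : k ∈ Nn
      · rw [if_pos ⟨hkN, hm0 k (Finset.mem_Ico.1 hk).1⟩, Set.indicator_of_mem hkN]
      · rw [if_neg (fun h => hkN h.1), Set.indicator_of_notMem hkN, add_zero]
    by_cases hu : Summable (P1.indicator fun i => |a i|)
    · have hu' : Summable (P1.indicator a) :=
        Summable.of_abs (Summable.of_nonneg_of_le (fun n => abs_nonneg _)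
          (fun n => ind_abs_le a (X := P1) (Y := P1) (le_refl _) n) hu)
      have hga : Tendsto (fun n => ∑ k ∈ Finset.range n,
          (a k - P1.indicator a k - P2.indicator a k - P3.indicator a k)) atTop
          (nhds (LS - (∑' k, P1.indicator a k) - (∑' k, P2.indicator a k)
            - (∑' k, P3.indicator a k))) := by
        have h := ((hLS.sub hu'.hasSum.tendsto_sum_nat).sub
          hvsum.hasSum.tendsto_sum_nat).sub hwsum.hasSum.tendsto_sum_nat
        refine h.congr fun n => ?_
        simp [Finset.sum_sub_distrib]
      refine ⟨T m0 - (∑ k ∈ Finset.range m0,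
          (a k - P1.indicator a k - P2.indicator a k - P3.indicator a k))
          + (LS - (∑' k, P1.indicator a k) - (∑' k, P2.indicator a k)
            - (∑' k, P3.indicator a k)), ?_⟩
      refine (Tendsto.const_add _ hga).congr' ?_
      filter_upwards [eventually_ge_atTop m0] with n hn
      rw [key n hn, Finset.sum_Ico_eq_sub _ hn]
      ring
    · exfalso
      have hu_div : Tendsto (fun n => ∑ k ∈ Finset.range n,
          P1.indicator (fun i => |a i|) k) atTop atTop :=
        (not_summable_iff_tendsto_nat_atTop_of_nonneg
          (fun n => Set.indicator_nonneg (fun m _ => abs_nonneg _) n)).1 hu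
      have hga : Tendsto (fun n => ∑ k ∈ Finset.range n,
          (a k - P2.indicator a k - P3.indicator a k)) atTop
          (nhds (LS - (∑' k, P2.indicator a k) - (∑' k, P3.indicator a k))) := by
        have h := (hLS.sub hvsum.hasSum.tendsto_sum_nat).sub hwsum.hasSum.tendsto_sum_nat
        refine h.congr fun n => ?_
        simp [Finset.sum_sub_distrib]
      have hR : Tendsto (fun n => T n + ∑ k ∈ Finset.range n, P1.indicator (fun i => |a i|) k)
          atTop (nhds (T m0 + (∑ k ∈ Finset.range m0, P1.indicator (fun i => |a i|) k)
            - (∑ k ∈ Finset.range m0, (a k - P2.indicator a k - P3.indicator a k))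
            + (LS - (∑' k, P2.indicator a k) - (∑' k, P3.indicator a k)))) := by
        refine (Tendsto.const_add _ hga).congr' ?_
        filter_upwards [eventually_ge_atTop m0] with n hn
        have h2 : ∑ k ∈ Finset.Ico m0 n, P1.indicator a k
            = ∑ k ∈ Finset.range n, P1.indicator (fun i => |a i|) k
              - ∑ k ∈ Finset.range m0, P1.indicator (fun i => |a i|) k := by
          rw [Finset.sum_congr rfl (fun k _ => ind_pos_abs a (A \ C) k)]
          exact Finset.sum_Ico_eq_sub _ hn
        have h3 : ∑ k ∈ Finset.Ico m0 n, (a k - P2.indicator a k - P3.indicator a k)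
            = ∑ k ∈ Finset.range n, (a k - P2.indicator a k - P3.indicator a k)
              - ∑ k ∈ Finset.range m0, (a k - P2.indicator a k - P3.indicator a k) :=
          Finset.sum_Ico_eq_sub _ hn
        have h4 := key n hn
        have h5 : ∑ k ∈ Finset.Ico m0 n,
            (a k - P1.indicator a k - P2.indicator a k - P3.indicator a k)
            = ∑ k ∈ Finset.Ico m0 n, (a k - P2.indicator a k - P3.indicator a k)
              - ∑ k ∈ Finset.Ico m0 n, P1.indicator a k := by
          rw [← Finset.sum_sub_distrib]
          exact Finset.sum_congr rfl fun k _ => by ring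
        rw [h4, h5, h3, h2]
        ring
      have hRtop : Tendsto (fun n => T n + ∑ k ∈ Finset.range n,
          P1.indicator (fun i => |a i|) k) atTop atTop := by
        refine tendsto_atTop_mono' atTop ?_ hu_div
        filter_upwards [eventually_ge_atTop m0] with n hn
        have := hm0 n hn
        linarith
      exact not_tendsto_atTop_of_tendsto_nhds hR hRtop
end

section
/- Let ∑ a_n be a conditionally convergent series of real numbers and let A ⊆ ℕ with both A and ℕ \ A tame with respect to ∑ a_n, the subseries of a over A tending to +∞, and the subseries of a over ℕ \ A tending to -∞. If C ⊆ A and the subseries of a over C ∪ (ℕ \ A) does not converge to any real number, then the subseries of a over C ∪ (ℕ \ A) tends to -∞. -/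
open Filter

lemma partialSum_split (a : ℕ → ℝ) (S : Set ℕ) (N : ℕ) :
    partialSum a S N = partialSum a {n ∈ S | 0 < a n} N + partialSum a {n ∈ S | a n ≤ 0} N := by
  unfold partialSum
  rw [← Finset.sum_add_distrib]
  refine Finset.sum_congr rfl fun n _ => ?_
  by_cases hS : n ∈ S
  · by_cases hp : 0 < a n
    · simp [Set.indicator, Set.mem_setOf_eq, hS, hp, not_le.mpr hp]
    · simp [Set.indicator, Set.mem_setOf_eq, hS, hp, not_lt.mp hp]
  · simp [Set.indicator, Set.mem_setOf_eq, hS]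

lemma absConv_tendsto (a : ℕ → ℝ) {S : Set ℕ} (h : AbsConvOn a S) :
    ∃ L, Tendsto (partialSum a S) atTop (nhds L) := by
  have h2 : Summable (S.indicator a) := by
    refine Summable.of_abs ?_
    have e : (fun n => |S.indicator a n|) = S.indicator fun n => |a n| := by
      funext n; by_cases hn : n ∈ S <;> simp [Set.indicator, hn]
    rwa [e]
  exact ⟨∑' n, S.indicator a n, h2.hasSum.tendsto_sum_nat⟩

/-- Claim 2 in Lemma 9: with `A` and `ℕ \ A` tame, the subseries over `A` tending to `+∞`
and over `ℕ \ A` tending to `-∞`, if `C ⊆ A` and the subseries over `C ∪ (ℕ \ A)` does not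
converge, then it tends to `-∞`. -/
theorem balance_two_claim_two (a : ℕ → ℝ) (hcc : CondConv a) (A : Set ℕ)
    (hA : Tame a A) (hAc : Tame a (Set.univ \ A))
    (htop : Tendsto (partialSum a A) atTop atTop)
    (hbot : Tendsto (partialSum a (Set.univ \ A)) atTop atBot)
    (C : Set ℕ) (hCA : C ⊆ A)
    (hC : ¬ ∃ L : ℝ, Tendsto (partialSum a (C ∪ (Set.univ \ A))) atTop (nhds L)) :
    Tendsto (partialSum a (C ∪ (Set.univ \ A))) atTop atBot := by
  obtain ⟨L, hL⟩ := hcc.1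
  -- the nonpositive part of `A` is absolutely convergent
  have hAneg : AbsConvOn a {n ∈ A | a n ≤ 0} := by
    rcases hA with h | h
    · exfalso
      set M := ∑' n, ({n ∈ A | 0 < a n}).indicator (fun n => |a n|) n with hM
      have hbd : ∀ N, partialSum a A N ≤ M := by
        intro N
        rw [partialSum_split a A N]
        have h1 : partialSum a {n ∈ A | 0 < a n} N ≤ M := by
          have step : ∀ n, ({n ∈ A | 0 < a n}).indicator a n
              ≤ ({n ∈ A | 0 < a n}).indicator (fun n => |a n|) n := by
            intro n
            by_cases hn : n ∈ {n ∈ A | 0 < a n} <;>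
              simp [Set.indicator_of_mem, Set.indicator_of_notMem, hn, le_abs_self]
          calc partialSum a {n ∈ A | 0 < a n} N
              ≤ ∑ n ∈ Finset.range N, ({n ∈ A | 0 < a n}).indicator (fun n => |a n|) n :=
                Finset.sum_le_sum fun n _ => step n
            _ ≤ M := Summable.sum_le_tsum _ (fun n _ =>
                Set.indicator_nonneg (fun _ _ => abs_nonneg _) n) h
        have h2 : partialSum a {n ∈ A | a n ≤ 0} N ≤ 0 := by
          refine Finset.sum_nonpos fun n _ => ?_
          by_cases hn : n ∈ {n ∈ A | a n ≤ 0}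
          · simp only [Set.indicator_of_mem hn]; exact hn.2
          · simp [Set.indicator_of_notMem hn]
        linarith
      obtain ⟨N, hN⟩ := (htop.eventually (eventually_gt_atTop M)).exists
      exact absurd (hbd N) (not_le.mpr hN)
    · exact h
  -- partition of the full sum
  have hpart : ∀ N, ∑ n ∈ Finset.range N, a n
      = partialSum a (C ∪ (Set.univ \ A)) N + partialSum a (A \ C) N := by
    intro N
    unfold partialSum
    rw [← Finset.sum_add_distrib]
    refine Finset.sum_congr rfl fun n _ => ?_
    by_cases hnA : n ∈ A
    · by_cases hnC : n ∈ C
      · simp [Set.indicator, hnA, hnC]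
      · simp [Set.indicator, hnA, hnC]
    · have hnC : n ∉ C := fun h => hnA (hCA h)
      simp [Set.indicator, hnA, hnC]
  -- nonpositive part of `A \ C` is absolutely convergent
  have hBneg : AbsConvOn a {n ∈ A \ C | a n ≤ 0} := by
    refine Summable.of_nonneg_of_le
      (fun n => Set.indicator_nonneg (fun _ _ => abs_nonneg _) n)
      (fun n => Set.indicator_le_indicator_of_subset ?_ (fun _ => abs_nonneg _) n) hAneg
    exact fun n hn => ⟨hn.1.1, hn.2⟩
  obtain ⟨l₀, hl₀⟩ := absConv_tendsto a hBneg
  -- positive part of `A \ C` has monotone partial sums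
  have hmono : Monotone (partialSum a {n ∈ A \ C | 0 < a n}) := by
    intro N M hNM
    exact Finset.sum_le_sum_of_subset_of_nonneg (Finset.range_subset_range.mpr hNM)
      fun n _ _ => Set.indicator_nonneg (fun m hm => le_of_lt hm.2) n
  have hDeq : ∀ N, partialSum a (C ∪ (Set.univ \ A)) N
      = ((∑ n ∈ Finset.range N, a n) - partialSum a {n ∈ A \ C | a n ≤ 0} N)
        + (- partialSum a {n ∈ A \ C | 0 < a n} N) := by
    intro N
    have := hpart N
    rw [partialSum_split a (A \ C) N] at this
    linarith
  rcases tendsto_of_monotone hmono with hf | ⟨l₁, hf⟩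
  · have : Tendsto (partialSum a (C ∪ (Set.univ \ A))) atTop atBot := by
      rw [show partialSum a (C ∪ (Set.univ \ A)) = fun N =>
        ((∑ n ∈ Finset.range N, a n) - partialSum a {n ∈ A \ C | a n ≤ 0} N)
          + (- partialSum a {n ∈ A \ C | 0 < a n} N) from funext hDeq]
      exact (hL.sub hl₀).add_atBot (tendsto_neg_atBot_iff.mpr hf)
    exact this
  · exfalso
    refine hC ⟨(L - l₀) + (-l₁), ?_⟩
    rw [show partialSum a (C ∪ (Set.univ \ A)) = fun N =>
      ((∑ n ∈ Finset.range N, a n) - partialSum a {n ∈ A \ C | a n ≤ 0} N)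
        + (- partialSum a {n ∈ A \ C | 0 < a n} N) from funext hDeq]
    exact (hL.sub hl₀).add hf.neg
end
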